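/- arXiv:0901.0661 — 2 statements merged into one kernel-verified Lean document; each statement's English description precedes it below -/
import Mathlib

section
/- Consider long-range percolation on ℤ^d with connection function λ satisfying λ(r) < α r^{−β''} for all r ≥ 1, for some constants α > 0 and β'' > 0. Then for every k ∈ ℕ_+ and every x ∈ ℤ^d with x ≠ 0, P(D(0,x) ≤ k) ≤ Σ_{i=1}^{k} E(|B_{i−1}|) · E(|B_{k−i}|) · α (‖x‖/k)^{−β''}. -/
open MeasureTheory ProbabilityTheory Filter Set
open scoped ENNReal NNReal

noncomputable section

namespace LongRangePercolation

/-- Vertices of the lattice `ℤ^d`. -/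
abbrev Vtx (d : ℕ) := Fin d → ℤ

variable {d : ℕ} {Ω : Type*}

/-- The random graph determined by an edge configuration `ω`:
`x` and `y` are adjacent iff they are distinct and the edge `{x, y}` is open in `ω`. -/
def percGraph (edge : Sym2 (Vtx d) → Ω → Bool) (ω : Ω) : SimpleGraph (Vtx d) where
  Adj x y := x ≠ y ∧ edge s(x, y) ω = true
  symm := by
    constructor
    intro x y h
    refine ⟨h.1.symm, ?_⟩
    rw [Sym2.eq_swap]
    exact h.2
  loopless := by constructor; intro x h; exact h.1 rfl

/-- The event that the origin belongs to an infinite cluster. -/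
def percEvent (edge : Sym2 (Vtx d) → Ω → Bool) : Set Ω :=
  {ω | {y : Vtx d | (percGraph edge ω).Reachable 0 y}.Infinite}

/-- The `k`-ball around the origin in the graph metric. -/
def ball (edge : Sym2 (Vtx d) → Ω → Bool) (ω : Ω) (k : ℕ) : Set (Vtx d) :=
  {y | (percGraph edge ω).edist 0 y ≤ (k : ℕ∞)}

/-- Expected size of the `k`-ball, `E|B_k|`, as an extended nonnegative real. -/
def EB [MeasurableSpace Ω] (μ : Measure Ω) (edge : Sym2 (Vtx d) → Ω → Bool) (k : ℕ) : ℝ≥0∞ :=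
  ∫⁻ ω, ((ball edge ω k).encard : ℝ≥0∞) ∂μ

/-- `|B_k|^{1/k}` as an extended nonnegative real. -/
def growth (edge : Sym2 (Vtx d) → Ω → Bool) (ω : Ω) (k : ℕ) : ℝ≥0∞ :=
  ((ball edge ω k).encard : ℝ≥0∞) ^ (1 / (k : ℝ))

/-- A function `L : (0,∞) → (0,∞)` is slowly varying if `L(cr)/L(r) → 1` as `r → ∞`
for every `c > 0`. -/
def SlowlyVarying (L : ℝ → ℝ) : Prop :=
  ∀ c : ℝ, 0 < c → Tendsto (fun r => L (c * r) / L r) atTop (nhds 1)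

/-- Bundled hypotheses asserting that `(μ, edge)` is a homogeneous long-range percolation
model on `ℤ^d` with connection function `lam`: the edge indicators are independent, and an
edge between distinct `x` and `y` is present with probability `1 - exp(-λ(‖x - y‖))`,
where `‖·‖` is the `L^∞` norm. -/
structure IsLRPModel (d : ℕ) {Ω : Type*} [MeasurableSpace Ω] (μ : Measure Ω)
    (edge : Sym2 (Vtx d) → Ω → Bool) (lam : ℝ → ℝ) : Prop where
  d_pos : 0 < d
  prob : IsProbabilityMeasure μ
  meas : ∀ e, Measurable (edge e)
  indep : iIndepFun edge μ
  lam_pos : ∀ r : ℝ, 0 < r → 0 < lam r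
  edge_prob : ∀ x y : Vtx d, x ≠ y →
    μ {ω | edge s(x, y) ω = true} = ENNReal.ofReal (1 - Real.exp (-(lam ‖x - y‖)))

/-- The percolation graph restricted to a vertex set `V` (only edges inside `V`). -/
def restGraph (edge : Sym2 (Vtx d) → Ω → Bool) (ω : Ω) (V : Set (Vtx d)) :
    SimpleGraph (Vtx d) where
  Adj x y := x ∈ V ∧ y ∈ V ∧ (percGraph edge ω).Adj x y
  symm := by
    constructor
    intro x y h
    exact ⟨h.2.1, h.1, h.2.2.symm⟩
  loopless := by
    constructor
    intro x h
    exact h.2.2.ne rfl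

/-- The cluster (connected component, as a vertex set) of `x` in a graph `G`. -/
def cluster (G : SimpleGraph (Vtx d)) (x : Vtx d) : Set (Vtx d) :=
  {y | G.Reachable x y}

/-- The box `V_K = ℤ^d ∩ [⌈-K/2⌉, ⌈K/2⌉)^d`. -/
def VK (d : ℕ) (r : ℕ) : Set (Vtx d) :=
  {x | ∀ i, ⌈-(r : ℝ) / 2⌉ ≤ x i ∧ x i < ⌈(r : ℝ) / 2⌉}

/-- The size of the largest cluster of the percolation graph restricted to `V_r`. -/
def maxClSize (edge : Sym2 (Vtx d) → Ω → Bool) (ω : Ω) (r : ℕ) : ℕ∞ :=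
  ⨆ x ∈ VK d r, (cluster (restGraph edge ω (VK d r)) x).encard

/-! ### The renormalisation construction -/

/-- `l_i = l_0^(2^i)`. -/
def lseq (l0 i : ℕ) : ℕ := l0 ^ (2 ^ i)

/-- The level-`i` block with index `n`:
`Λ_i(n) = ℤ^d ∩ ([-(l_i - 1)/2, (l_i - 1)/2]^d + n l_i)` (for odd `l_0`). -/
def block (d l0 i : ℕ) (n : Vtx d) : Set (Vtx d) :=
  {x | ∀ j, |x j - n j * (lseq l0 i : ℤ)| ≤ ((lseq l0 i : ℤ) - 1) / 2}

/-- The index of the level-`i` block containing `x`. -/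
def blockIdx (d l0 i : ℕ) (x : Vtx d) : Vtx d :=
  fun j => Int.fdiv (x j + ((lseq l0 i : ℤ) - 1) / 2) (lseq l0 i : ℤ)

/-- `h_i = (l_0^d + 1) 2^i - 1`. -/
def hseq (d l0 i : ℕ) : ℕ := (l0 ^ d + 1) * 2 ^ i - 1

/-- `D_i(x)`: the set of vertices of the level-`i` block of `x` within graph distance `h_i`
of `x` in the graph restricted to that block. -/
def Dset (edge : Sym2 (Vtx d) → Ω → Bool) (l0 : ℕ) (ω : Ω) (i : ℕ) (x : Vtx d) :
    Set (Vtx d) :=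
  {y | y ∈ block d l0 i (blockIdx d l0 i x) ∧
    (restGraph edge ω (block d l0 i (blockIdx d l0 i x))).edist x y ≤ (hseq d l0 i : ℕ∞)}

/-- `M_i = Π_{j=0}^i m_j`, defined by `M_0 = ρ l_0^d`, `M_{i+1} = c_0 L(l_{i+1}) M_i^2`
with `c_0 = 2ρ/25`. -/
def Mseq (d l0 : ℕ) (L : ℝ → ℝ) (ρ : ℝ) : ℕ → ℝ
  | 0 => ρ * (l0 : ℝ) ^ d
  | i + 1 => (2 * ρ / 25) * L ((lseq l0 (i + 1) : ℕ) : ℝ) * (Mseq d l0 L ρ i) ^ 2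

/-- `m_0 = ρ l_0^d` and `m_{i+1} = c_0 L(l_{i+1}) M_i` with `c_0 = 2ρ/25`. -/
def mseq (d l0 : ℕ) (L : ℝ → ℝ) (ρ : ℝ) : ℕ → ℝ
  | 0 => ρ * (l0 : ℝ) ^ d
  | i + 1 => (2 * ρ / 25) * L ((lseq l0 (i + 1) : ℕ) : ℝ) * Mseq d l0 L ρ i

/-- `x` is good up to level `i` in configuration `ω`. -/
def good (edge : Sym2 (Vtx d) → Ω → Bool) (l0 : ℕ) (L : ℝ → ℝ) (ρ : ℝ) :
    ℕ → Vtx d → Ω → Prop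
  | 0, x, ω =>
      ENNReal.ofReal (mseq d l0 L ρ 0) ≤ ((Dset edge l0 ω 0 x).encard : ℝ≥0∞)
  | i + 1, x, ω =>
      good edge l0 L ρ i x ω ∧
      ENNReal.ofReal (mseq d l0 L ρ (i + 1)) ≤
        (({n : Vtx d |
            block d l0 i n ⊆ block d l0 (i + 1) (blockIdx d l0 (i + 1) x) ∧
            ∃ y ∈ block d l0 i n,
              y ∉ block d l0 i 0 ∪ block d l0 i (blockIdx d l0 i x) ∧
              good edge l0 L ρ i y ω ∧
              ∃ z ∈ Dset edge l0 ω i x, (percGraph edge ω).Adj y z}).encard : ℝ≥0∞)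

/-- A vertex is ultimately good if it is good up to every level. -/
def ultGood (edge : Sym2 (Vtx d) → Ω → Bool) (l0 : ℕ) (L : ℝ → ℝ) (ρ : ℝ)
    (x : Vtx d) (ω : Ω) : Prop :=
  ∀ i : ℕ, good edge l0 L ρ i x ω

end LongRangePercolation


namespace Stmt8Aux

open LongRangePercolation MeasureTheory ProbabilityTheory Set

section Chain

variable {V : Type*}

lemma edist_le_iff_exists_chain (G : SimpleGraph V) (a b : V) (n : ℕ) :
    G.edist a b ≤ (n : ℕ∞) ↔ ∃ g : ℕ → V, g 0 = a ∧ g n = b ∧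
      ∀ t, t < n → g t = g (t + 1) ∨ G.Adj (g t) (g (t + 1)) := by
  constructor
  · intro h
    have hne : G.edist a b ≠ ⊤ := by
      intro htop
      rw [htop] at h
      exact (ENat.coe_lt_top n).not_ge h
    obtain ⟨w, hw⟩ := (G.reachable_of_edist_ne_top hne).exists_walk_length_eq_edist
    have hlen : (w.length : ℕ∞) ≤ (n : ℕ∞) := hw ▸ h
    have hlen' : w.length ≤ n := by exact_mod_cast hlen
    refine ⟨fun t => w.getVert t, w.getVert_zero, w.getVert_of_length_le hlen', ?_⟩
    intro t ht
    by_cases htl : t < w.length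
    · exact Or.inr (w.adj_getVert_succ htl)
    · push_neg at htl
      exact Or.inl (by
        show w.getVert t = w.getVert (t + 1)
        rw [w.getVert_of_length_le htl, w.getVert_of_length_le (htl.trans (Nat.le_succ t))])
  · rintro ⟨g, h0, hn, hstep⟩
    induction n generalizing b with
    | zero =>
      have : a = b := h0 ▸ hn
      subst this
      simp [SimpleGraph.edist_self]
    | succ n ih =>
      have h1 : G.edist a (g n) ≤ (n : ℕ∞) :=
        ih (g n) rfl fun t ht => hstep t (ht.trans (Nat.lt_succ_self n))
      rcases hstep n (Nat.lt_succ_self n) with heq | hadj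
      · rw [← hn, ← heq]
        calc G.edist a (g n) ≤ (n : ℕ∞) := h1
        _ ≤ ((n + 1 : ℕ) : ℕ∞) := by exact_mod_cast Nat.le_succ n
      · calc G.edist a b ≤ G.edist a (g n) + G.edist (g n) b := G.edist_triangle
        _ ≤ (n : ℕ∞) + 1 := by
            refine add_le_add h1 ?_
            rw [← hn]
            exact le_of_eq (SimpleGraph.edist_eq_one_iff_adj.mpr hadj)
        _ = ((n + 1 : ℕ) : ℕ∞) := by push_cast; rfl

lemma edist_le_of_chain_map {W : Type*} (G : SimpleGraph V) (G' : SimpleGraph W) (σ : V → W)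
    (h : ∀ u v, G.Adj u v → G'.Adj (σ u) (σ v)) (a b : V) (n : ℕ)
    (hd : G.edist a b ≤ (n : ℕ∞)) : G'.edist (σ a) (σ b) ≤ (n : ℕ∞) := by
  rw [edist_le_iff_exists_chain] at hd ⊢
  obtain ⟨g, h0, hn, hstep⟩ := hd
  refine ⟨σ ∘ g, by simp [h0], by simp [hn], fun t ht => ?_⟩
  rcases hstep t ht with heq | hadj
  · exact Or.inl (by simp [Function.comp, heq])
  · exact Or.inr (h _ _ hadj)

end Chain

end Stmt8Aux

namespace Stmt8Aux

open LongRangePercolation MeasureTheory ProbabilityTheory Set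

section Ball

variable {d : ℕ} {Ω : Type*} (edge : Sym2 (Vtx d) → Ω → Bool)

lemma mem_ball_iff (ω : Ω) (n : ℕ) (y : Vtx d) :
    y ∈ ball edge ω n ↔ (percGraph edge ω).edist 0 y ≤ (n : ℕ∞) := Iff.rfl

lemma ball_zero (ω : Ω) : ball edge ω 0 = {0} := by
  ext y
  simp only [mem_ball_iff, Nat.cast_zero, nonpos_iff_eq_zero, SimpleGraph.edist_eq_zero_iff,
    mem_singleton_iff]
  exact eq_comm

lemma ball_mono (ω : Ω) {s t : ℕ} (h : s ≤ t) : ball edge ω s ⊆ ball edge ω t := by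
  intro y hy
  exact le_trans (mem_ball_iff edge ω s y |>.mp hy) (by exact_mod_cast h)

lemma ball_succ (ω : Ω) (t : ℕ) :
    ball edge ω (t + 1) =
      ball edge ω t ∪ {v | ∃ u ∈ ball edge ω t, (percGraph edge ω).Adj u v} := by
  ext v
  simp only [mem_ball_iff, mem_union, mem_setOf_eq]
  constructor
  · intro h
    rw [edist_le_iff_exists_chain] at h
    obtain ⟨g, h0, hn, hstep⟩ := h
    have hgt : (percGraph edge ω).edist 0 (g t) ≤ (t : ℕ∞) := by
      rw [edist_le_iff_exists_chain]
      exact ⟨g, h0, rfl, fun s hs => hstep s (hs.trans (Nat.lt_succ_self t))⟩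
    rcases hstep t (Nat.lt_succ_self t) with heq | hadj
    · exact Or.inl (by rw [← hn, ← heq]; exact hgt)
    · exact Or.inr ⟨g t, hgt, hn ▸ hadj⟩
  · rintro (h | ⟨u, hu, hadj⟩)
    · exact le_trans h (by exact_mod_cast Nat.le_succ t)
    · calc (percGraph edge ω).edist 0 v ≤
          (percGraph edge ω).edist 0 u + (percGraph edge ω).edist u v :=
            SimpleGraph.edist_triangle
      _ ≤ (t : ℕ∞) + 1 := add_le_add hu (le_of_eq (SimpleGraph.edist_eq_one_iff_adj.mpr hadj))
      _ = ((t + 1 : ℕ) : ℕ∞) := by push_cast; rfl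

lemma mem_ball_succ_of_adj (ω : Ω) (t : ℕ) {u v : Vtx d} (hu : u ∈ ball edge ω t)
    (h : (percGraph edge ω).Adj u v) : v ∈ ball edge ω (t + 1) := by
  rw [ball_succ]
  exact Or.inr ⟨u, hu, h⟩

end Ball

section Meas

variable {V : Type*} [Countable V] {Ω : Type*}

/-- Measurability (w.r.t. any σ-algebra `m'`) of the event that the graph distance is `≤ n`,
from measurability of the adjacency events. -/
lemma measurableSet_edist_le (m' : MeasurableSpace Ω) (G : Ω → SimpleGraph V)
    (hG : ∀ u v : V, MeasurableSet[m'] {ω | (G ω).Adj u v}) (a b : V) (n : ℕ) :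
    MeasurableSet[m'] {ω | (G ω).edist a b ≤ (n : ℕ∞)} := by
  classical
  have hset : {ω | (G ω).edist a b ≤ (n : ℕ∞)} =
      ⋃ (g : Fin (n + 1) → V) (_ : g 0 = a ∧ g (Fin.last n) = b),
        ⋂ (t : Fin n), {ω | g t.castSucc = g t.succ ∨ (G ω).Adj (g t.castSucc) (g t.succ)} := by
    ext ω
    simp only [mem_setOf_eq, mem_iUnion, mem_iInter]
    rw [edist_le_iff_exists_chain]
    constructor
    · rintro ⟨g, h0, hn, hstep⟩
      refine ⟨fun i => g i, ⟨h0, hn⟩, fun t => ?_⟩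
      have := hstep t t.isLt
      simpa [Fin.castSucc, Fin.succ] using this
    · rintro ⟨g, ⟨h0, hn⟩, hstep⟩
      refine ⟨fun t => if h : t ≤ n then g ⟨t, Nat.lt_succ_of_le h⟩ else b, ?_, ?_, ?_⟩
      · simpa using h0
      · simp only [le_refl, dif_pos]
        convert hn using 2
        rfl
      · intro t ht
        have h1 : t ≤ n := ht.le
        have h2 : t + 1 ≤ n := ht
        have := hstep ⟨t, ht⟩
        simp only [dif_pos h1, dif_pos h2]
        simpa [Fin.castSucc, Fin.succ] using this
  rw [hset]
  refine MeasurableSet.iUnion fun g => MeasurableSet.iUnion fun _ =>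
    MeasurableSet.iInter fun t => ?_
  by_cases heq : g t.castSucc = g t.succ
  · have : {ω | g t.castSucc = g t.succ ∨ (G ω).Adj (g t.castSucc) (g t.succ)} = univ := by
      ext ω; simp [heq]
    rw [this]; exact MeasurableSet.univ
  · have : {ω | g t.castSucc = g t.succ ∨ (G ω).Adj (g t.castSucc) (g t.succ)} =
        {ω | (G ω).Adj (g t.castSucc) (g t.succ)} := by
      ext ω; simp [heq]
    rw [this]; exact hG _ _

end Meas

end Stmt8Aux

namespace Stmt8Aux

open LongRangePercolation MeasureTheory ProbabilityTheory Set

section BallEq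

variable {d : ℕ} {Ω : Type*} (edge : Sym2 (Vtx d) → Ω → Bool)

lemma measurableSet_ball_eq (m' : MeasurableSpace Ω) (S' : Finset (Vtx d)) (j : ℕ)
    (h : ∀ u v : Vtx d, u ∈ S' → MeasurableSet[m'] {ω | (percGraph edge ω).Adj u v}) :
    MeasurableSet[m'] {ω | ball edge ω j = ↑S'} := by
  classical
  have hset : {ω | ball edge ω j = ↑S'} =
      ⋃ (T : Fin (j + 1) → Finset (Vtx d))
        (_ : T 0 = {0} ∧ T (Fin.last j) = S' ∧ ∀ i, T i ⊆ S'),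
        ⋂ (t : Fin j), ⋂ (v : Vtx d),
          {ω | v ∈ T t.succ ↔
            (v ∈ T t.castSucc ∨ ∃ u ∈ T t.castSucc, (percGraph edge ω).Adj u v)} := by
    ext ω
    simp only [mem_setOf_eq, mem_iUnion, mem_iInter]
    constructor
    · intro hb
      have hfin : ∀ t : ℕ, t ≤ j → (ball edge ω t).Finite := fun t ht =>
        Set.Finite.subset S'.finite_toSet (hb ▸ ball_mono edge ω ht)
      refine ⟨fun i => (hfin i.val (Nat.lt_succ_iff.mp i.isLt)).toFinset, ⟨?_, ?_, ?_⟩, ?_⟩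
      · ext v
        simp [Set.Finite.mem_toFinset, ball_zero]
      · ext v
        simp only [Set.Finite.mem_toFinset]
        rw [show ((Fin.last j : Fin (j+1)).val) = j from rfl, hb]
        simp
      · intro i v hv
        rw [Set.Finite.mem_toFinset] at hv
        have : v ∈ ball edge ω j := ball_mono edge ω (Nat.lt_succ_iff.mp i.isLt) hv
        rw [hb] at this
        exact_mod_cast this
      · intro t v
        simp only [mem_setOf_eq, Set.Finite.mem_toFinset]
        rw [show ((t.succ : Fin (j+1)).val) = t.val + 1 from rfl,
          show ((t.castSucc : Fin (j+1)).val) = t.val from rfl]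
        rw [ball_succ]
        simp only [mem_union, mem_setOf_eq]
    · rintro ⟨T, ⟨h0, hlast, hsub⟩, hstep⟩
      have claim : ∀ t : ℕ, ∀ ht : t ≤ j,
          ball edge ω t = ↑(T ⟨t, Nat.lt_succ_of_le ht⟩) := by
        intro t
        induction t with
        | zero =>
          intro ht
          rw [ball_zero]
          have : T ⟨0, Nat.lt_succ_of_le ht⟩ = ({0} : Finset (Vtx d)) := h0
          rw [this]
          simp
        | succ t ih =>
          intro ht
          have ht' : t ≤ j := le_trans (Nat.le_succ t) ht
          have htj : t < j := ht
          have key := hstep ⟨t, htj⟩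
          have hcast : (⟨t, htj⟩ : Fin j).castSucc = ⟨t, Nat.lt_succ_of_le ht'⟩ := rfl
          have hsucc : (⟨t, htj⟩ : Fin j).succ = ⟨t + 1, Nat.lt_succ_of_le ht⟩ := rfl
          ext v
          rw [ball_succ, ih ht']
          constructor
          · rintro hv
            have := (key v).mpr
            rw [hcast, hsucc] at this key
            refine this ?_
            simpa using hv
          · intro hv
            have := (key v).mp
            rw [hcast, hsucc] at this
            have h2 := this hv
            simpa using h2
      have := claim j le_rfl
      rw [this]
      have : (⟨j, Nat.lt_succ_of_le le_rfl⟩ : Fin (j+1)) = Fin.last j := rfl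
      rw [this, hlast]
  rw [hset]
  refine MeasurableSet.iUnion fun T => MeasurableSet.iUnion fun hT =>
    MeasurableSet.iInter fun t => MeasurableSet.iInter fun v => ?_
  have hR : MeasurableSet[m'] {ω | ∃ u ∈ T t.castSucc, (percGraph edge ω).Adj u v} := by
    have : {ω | ∃ u ∈ T t.castSucc, (percGraph edge ω).Adj u v} =
        ⋃ u ∈ (↑(T t.castSucc) : Set (Vtx d)), {ω | (percGraph edge ω).Adj u v} := by
      ext ω; simp
    rw [this]
    exact MeasurableSet.biUnion (Set.to_countable _)
      (fun u hu => h u v (hT.2.2 t.castSucc (by exact_mod_cast hu)))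
  by_cases hP : v ∈ T t.succ <;> by_cases hQ : v ∈ T t.castSucc
  · have : {ω | v ∈ T t.succ ↔ (v ∈ T t.castSucc ∨ ∃ u ∈ T t.castSucc,
        (percGraph edge ω).Adj u v)} = univ := by
      ext ω; simp [hP, hQ]
    rw [this]; exact MeasurableSet.univ
  · have : {ω | v ∈ T t.succ ↔ (v ∈ T t.castSucc ∨ ∃ u ∈ T t.castSucc,
        (percGraph edge ω).Adj u v)} =
        {ω | ∃ u ∈ T t.castSucc, (percGraph edge ω).Adj u v} := by
      ext ω; simp [hP, hQ]
    rw [this]; exact hR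
  · have : {ω | v ∈ T t.succ ↔ (v ∈ T t.castSucc ∨ ∃ u ∈ T t.castSucc,
        (percGraph edge ω).Adj u v)} = ∅ := by
      ext ω; simp [hP, hQ]
    rw [this]; exact MeasurableSet.empty
  · have : {ω | v ∈ T t.succ ↔ (v ∈ T t.castSucc ∨ ∃ u ∈ T t.castSucc,
        (percGraph edge ω).Adj u v)} =
        {ω | ∃ u ∈ T t.castSucc, (percGraph edge ω).Adj u v}ᶜ := by
      ext ω; simp [hP, hQ]
    rw [this]; exact hR.compl

end BallEq

end Stmt8Aux

namespace Stmt8Aux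
set_option linter.unusedSectionVars false

open LongRangePercolation MeasureTheory ProbabilityTheory Set

section Indep

variable {d : ℕ} {Ω : Type*} [MeasurableSpace Ω] (edge : Sym2 (Vtx d) → Ω → Bool)

/-- The σ-algebra generated by the edge variables with index in `I`. -/
def mE (I : Set (Sym2 (Vtx d))) : MeasurableSpace Ω :=
  ⨆ e ∈ I, MeasurableSpace.comap (edge e) inferInstance

lemma cyl_mem_comap (e : Sym2 (Vtx d)) :
    MeasurableSet[MeasurableSpace.comap (edge e) inferInstance] {ω | edge e ω = true} := by
  refine ⟨{true}, trivial, ?_⟩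
  ext ω
  simp

lemma cyl_mem_mE {I : Set (Sym2 (Vtx d))} {e : Sym2 (Vtx d)} (he : e ∈ I) :
    MeasurableSet[mE edge I] {ω | edge e ω = true} := by
  have hle : MeasurableSpace.comap (edge e) inferInstance ≤ mE edge I := by
    exact le_iSup₂ (f := fun e' (_ : e' ∈ I) => MeasurableSpace.comap (edge e') inferInstance) e he
  exact hle _ (cyl_mem_comap edge e)

lemma mE_mono {I J : Set (Sym2 (Vtx d))} (h : I ⊆ J) : mE edge I ≤ mE (Ω := Ω) edge J :=
  biSup_mono h

lemma percAdj_mem_mE {I : Set (Sym2 (Vtx d))} {u v : Vtx d} (hI : u ≠ v → s(u, v) ∈ I) :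
    MeasurableSet[mE edge I] {ω | (percGraph edge ω).Adj u v} := by
  by_cases huv : u = v
  · have : {ω | (percGraph edge ω).Adj u v} = ∅ := by
      ext ω
      simp [percGraph, huv]
    rw [this]; exact @MeasurableSet.empty _ (mE edge I)
  · have : {ω | (percGraph edge ω).Adj u v} = {ω | edge s(u, v) ω = true} := by
      ext ω
      simp [percGraph, huv]
    rw [this]; exact cyl_mem_mE edge (hI huv)

lemma restAdj_mem_mE {I : Set (Sym2 (Vtx d))} (W : Set (Vtx d)) {u v : Vtx d}
    (hI : u ∈ W → v ∈ W → u ≠ v → s(u, v) ∈ I) :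
    MeasurableSet[mE edge I] {ω | (restGraph edge ω W).Adj u v} := by
  by_cases hmem : u ∈ W ∧ v ∈ W ∧ u ≠ v
  · have : {ω | (restGraph edge ω W).Adj u v} = {ω | edge s(u, v) ω = true} := by
      ext ω
      simp [restGraph, percGraph, hmem.1, hmem.2.1, hmem.2.2]
    rw [this]; exact cyl_mem_mE edge (hI hmem.1 hmem.2.1 hmem.2.2)
  · have : {ω | (restGraph edge ω W).Adj u v} = ∅ := by
      ext ω
      simp only [mem_setOf_eq, mem_empty_iff_false, iff_false]
      rintro ⟨h1, h2, h3, _⟩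
      exact hmem ⟨h1, h2, h3⟩
    rw [this]; exact @MeasurableSet.empty _ (mE edge I)

lemma mE_le (hmeas : ∀ e, Measurable (edge e)) (I : Set (Sym2 (Vtx d))) :
    mE (Ω := Ω) edge I ≤ ‹MeasurableSpace Ω› :=
  iSup₂_le fun e _ => (hmeas e).comap_le

lemma meas_inter3 {μ : Measure Ω} (hmeas : ∀ e, Measurable (edge e))
    (hindep : iIndepFun edge μ)
    {I1 I2 I3 : Set (Sym2 (Vtx d))} (h12 : Disjoint I1 I2) (h13 : Disjoint I1 I3)
    (h23 : Disjoint I2 I3) {A B C : Set Ω} (hA : MeasurableSet[mE edge I1] A)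
    (hB : MeasurableSet[mE edge I2] B) (hC : MeasurableSet[mE edge I3] C) :
    μ (A ∩ B ∩ C) = μ A * μ B * μ C := by
  have h_le : ∀ e : Sym2 (Vtx d),
      MeasurableSpace.comap (edge e) inferInstance ≤ ‹MeasurableSpace Ω› :=
    fun e => (hmeas e).comap_le
  have hI : iIndep (fun e => MeasurableSpace.comap (edge e) inferInstance) μ := hindep.iIndep
  have ind1 : Indep (mE edge I1) (mE edge (I2 ∪ I3)) μ :=
    indep_iSup_of_disjoint h_le hI (by rw [disjoint_union_right]; exact ⟨h12, h13⟩)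
  have ind2 : Indep (mE edge I2) (mE edge I3) μ :=
    indep_iSup_of_disjoint h_le hI h23
  have hBC : MeasurableSet[mE edge (I2 ∪ I3)] (B ∩ C) :=
    (mE_mono edge subset_union_left _ hB).inter (mE_mono edge subset_union_right _ hC)
  have e1 : μ (A ∩ (B ∩ C)) = μ A * μ (B ∩ C) :=
    (ProbabilityTheory.Indep_iff _ _ _).mp ind1 A (B ∩ C) hA hBC
  have e2 : μ (B ∩ C) = μ B * μ C :=
    (ProbabilityTheory.Indep_iff _ _ _).mp ind2 B C hB hC
  rw [inter_assoc, e1, e2, mul_assoc]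

end Indep

end Stmt8Aux

namespace Stmt8Aux

open LongRangePercolation MeasureTheory ProbabilityTheory Set
set_option linter.unusedSectionVars false

section Transl

variable {d : ℕ} {Ω : Type*} [MeasurableSpace Ω]

/-- Nondiagonal unordered pairs. -/
abbrev ND (d : ℕ) := {e : Sym2 (Vtx d) // ¬ e.IsDiag}

/-- Translation of a nondiagonal pair. -/
def tau (w : Vtx d) (e : ND d) : ND d :=
  ⟨Sym2.map (· + w) e.1, by
    rw [Sym2.isDiag_map (add_left_injective w)]
    exact e.2⟩

lemma tau_injective (w : Vtx d) : Function.Injective (tau w) := by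
  intro e1 e2 h
  apply Subtype.ext
  have := congrArg Subtype.val h
  exact Sym2.map.injective (add_left_injective w) this

lemma tau_zero (e : ND d) : tau (0 : Vtx d) e = e := by
  apply Subtype.ext
  have : (fun v : Vtx d => v + 0) = id := funext fun v => add_zero v
  show Sym2.map (· + 0) e.1 = e.1
  rw [this, Sym2.map_id, id]

variable (edge : Sym2 (Vtx d) → Ω → Bool)

/-- The configuration map shifted by `w`. -/
def Phi (w : Vtx d) (ω : Ω) : ND d → Bool := fun e => edge (tau w e).1 ω

lemma measurable_Phi (hmeas : ∀ e, Measurable (edge e)) (w : Vtx d) :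
    Measurable (Phi edge w) :=
  measurable_pi_iff.mpr fun e => hmeas _

/-- The graph associated with a configuration on nondiagonal pairs. -/
def graphOf (f : ND d → Bool) : SimpleGraph (Vtx d) where
  Adj u v := ∃ h : u ≠ v, f ⟨s(u, v), fun hd => h (Sym2.mk_isDiag_iff.mp hd)⟩ = true
  symm := by
    constructor
    rintro u v ⟨h, hf⟩
    refine ⟨h.symm, ?_⟩
    have hsub : (⟨s(v, u), fun hd => h.symm (Sym2.mk_isDiag_iff.mp hd)⟩ : ND d) =
        ⟨s(u, v), fun hd => h (Sym2.mk_isDiag_iff.mp hd)⟩ :=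
      Subtype.ext (Sym2.eq_swap)
    rw [hsub]
    exact hf
  loopless := by constructor; rintro u ⟨h, _⟩; exact h rfl

lemma graphOf_adj_Phi (w : Vtx d) (ω : Ω) (u v : Vtx d) :
    (graphOf (Phi edge w ω)).Adj u v ↔ (percGraph edge ω).Adj (u + w) (v + w) := by
  constructor
  · rintro ⟨h, hf⟩
    refine ⟨fun hc => h (by
      have := congrArg (fun z => z - w) hc
      simpa using this), ?_⟩
    have : (tau w ⟨s(u, v), fun hd => h (Sym2.mk_isDiag_iff.mp hd)⟩).1 = s(u + w, v + w) := by
      show Sym2.map (· + w) s(u, v) = s(u + w, v + w)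
      rw [Sym2.map_pair_eq]
    rw [← this]
    exact hf
  · rintro ⟨h, hf⟩
    have hne : u ≠ v := fun hc => h (by rw [hc])
    refine ⟨hne, ?_⟩
    show edge (tau w ⟨s(u, v), _⟩).1 ω = true
    have : (tau w ⟨s(u, v), fun hd => hne (Sym2.mk_isDiag_iff.mp hd)⟩).1 = s(u + w, v + w) := by
      show Sym2.map (· + w) s(u, v) = s(u + w, v + w)
      rw [Sym2.map_pair_eq]
    rw [this]
    exact hf

/-- The event that the graph distance is at most `n`, on the configuration space. -/
def FDist (a b : Vtx d) (n : ℕ) : Set (ND d → Bool) :=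
  {f | (graphOf f).edist a b ≤ (n : ℕ∞)}

lemma measurableSet_FDist (a b : Vtx d) (n : ℕ) : MeasurableSet (FDist a b n) := by
  apply measurableSet_edist_le _ graphOf _ a b n
  intro u v
  by_cases huv : u = v
  · have : {f : ND d → Bool | (graphOf f).Adj u v} = ∅ := by
      ext f
      simp only [mem_setOf_eq, mem_empty_iff_false, iff_false]
      rintro ⟨h, _⟩
      exact h huv
    rw [this]; exact MeasurableSet.empty
  · have : {f : ND d → Bool | (graphOf f).Adj u v} =
        (fun f : ND d → Bool => f ⟨s(u, v), fun hd => huv (Sym2.mk_isDiag_iff.mp hd)⟩) ⁻¹'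
          {true} := by
      ext f
      simp only [mem_setOf_eq, mem_preimage, mem_singleton_iff]
      constructor
      · rintro ⟨h, hf⟩; exact hf
      · intro hf; exact ⟨huv, hf⟩
    rw [this]
    exact measurable_pi_apply _ (measurableSet_singleton true)

lemma Phi_preimage_FDist (w a b : Vtx d) (n : ℕ) :
    Phi edge w ⁻¹' FDist a b n =
      {ω | (percGraph edge ω).edist (a + w) (b + w) ≤ (n : ℕ∞)} := by
  ext ω
  simp only [mem_preimage, FDist, mem_setOf_eq]
  constructor
  · intro h
    exact edist_le_of_chain_map _ _ (· + w)
      (fun u v huv => (graphOf_adj_Phi edge w ω u v).mp huv) a b n h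
  · intro h
    have := edist_le_of_chain_map (percGraph edge ω) (graphOf (Phi edge w ω)) (· - w)
      (fun u v huv => by
        rw [graphOf_adj_Phi edge w ω (u - w) (v - w), sub_add_cancel, sub_add_cancel]
        exact huv) (a + w) (b + w) n h
    simpa using this

end Transl

end Stmt8Aux

namespace Stmt8Aux

open LongRangePercolation MeasureTheory ProbabilityTheory Set
set_option linter.unusedSectionVars false

section TranslMeasure

variable {d : ℕ} {Ω : Type*} [MeasurableSpace Ω] (edge : Sym2 (Vtx d) → Ω → Bool)
  (μ : Measure Ω) (lam : ℝ → ℝ)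

/-- A singleton cylinder. -/
def cylSingle (s : Finset (ND d)) (g : ∀ _ : s, Bool) : Set (ND d → Bool) :=
  {f | ∀ e : s, f e = g e}

lemma measurableSet_cylSingle (s : Finset (ND d)) (g : ∀ _ : s, Bool) :
    MeasurableSet (cylSingle s g) := by
  have : cylSingle s g = ⋂ e : s, (fun f : ND d → Bool => f e) ⁻¹' {g e} := by
    ext f; simp [cylSingle]
  rw [this]
  exact MeasurableSet.iInter fun e => measurable_pi_apply _ (measurableSet_singleton _)

lemma map_Phi_cylSingle (hmeas : ∀ e, Measurable (edge e))
    (hindep : iIndepFun edge μ) (w : Vtx d)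
    (s : Finset (ND d)) (g : ∀ _ : s, Bool) :
    (μ.map (Phi edge w)) (cylSingle s g) =
      ∏ e ∈ s.attach, μ {ω | edge ((tau w e).1) ω = g e} := by
  classical
  rw [Measure.map_apply (measurable_Phi edge hmeas w) (measurableSet_cylSingle s g)]
  have hpre : Phi edge w ⁻¹' cylSingle s g =
      ⋂ e : s, {ω | edge ((tau w e).1) ω = g e} := by
    ext ω
    simp [cylSingle, Phi]
  rw [hpre]
  -- reindex through the injective map `e ↦ (tau w e).1`
  have hinj : Function.Injective (fun e : s => (tau w (e : ND d)).1) := by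
    intro e1 e2 h
    have := tau_injective w (Subtype.ext h : tau w e1 = tau w e2)
    exact Subtype.ext this
  set b' : Sym2 (Vtx d) → Bool :=
    Function.extend (fun e : s => (tau w (e : ND d)).1) (fun e => g e) (fun _ => true) with hb'
  have hb'app : ∀ e : s, b' ((tau w (e : ND d)).1) = g e := fun e => hinj.extend_apply _ _ e
  set J : Finset (Sym2 (Vtx d)) := s.attach.image (fun e : s => (tau w (e : ND d)).1) with hJ
  have hset : (⋂ e : s, {ω | edge ((tau w e).1) ω = g e}) =
      ⋂ e' ∈ J, (edge e') ⁻¹' {b' e'} := by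
    ext ω
    simp only [mem_iInter, mem_setOf_eq, hJ, Finset.mem_image, Finset.mem_attach, true_and,
      mem_preimage, mem_singleton_iff]
    constructor
    · rintro h e' ⟨e, -, rfl⟩
      rw [hb'app e]
      exact h e
    · intro h e
      have := h _ ⟨e, rfl⟩
      rw [hb'app e] at this
      exact this
  rw [hset]
  have := hindep.iIndep.meas_biInter (S := J)
    (s := fun e' => (edge e') ⁻¹' {b' e'})
    (fun e' _ => MeasurableSpace.measurableSet_comap.mpr ⟨{b' e'}, trivial, rfl⟩)
  rw [this]
  rw [hJ, Finset.prod_image (by intro e1 _ e2 _ h; exact hinj h)]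
  refine Finset.prod_congr rfl fun e _ => ?_
  show μ (edge ((tau w (e : ND d)).1) ⁻¹' {b' ((tau w (e : ND d)).1)}) =
    μ {ω | edge ((tau w (e : ND d)).1) ω = g e}
  rw [hb'app e]
  rfl

lemma marg_invariant (hmeas : ∀ e, Measurable (edge e)) [IsProbabilityMeasure μ]
    (hedge : ∀ u v : Vtx d, u ≠ v →
      μ {ω | edge s(u, v) ω = true} = ENNReal.ofReal (1 - Real.exp (-(lam ‖u - v‖))))
    (w : Vtx d) (e : ND d) (b : Bool) :
    μ {ω | edge ((tau w e).1) ω = b} = μ {ω | edge e.1 ω = b} := by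
  obtain ⟨E, hE⟩ := e
  induction E using Sym2.ind with
  | _ u v =>
    have huv : u ≠ v := fun h => hE (Sym2.mk_isDiag_iff.mpr h)
    have htau : (tau w ⟨s(u, v), hE⟩).1 = s(u + w, v + w) := by
      show Sym2.map (· + w) s(u, v) = _
      rw [Sym2.map_pair_eq]
    have huv' : u + w ≠ v + w := fun h => huv (by
      have := congrArg (fun z => z - w) h
      simpa using this)
    have hnorm : ‖(u + w) - (v + w)‖ = ‖u - v‖ := by
      rw [add_sub_add_right_eq_sub]
    have htrue : μ {ω | edge ((tau w ⟨s(u, v), hE⟩).1) ω = true} =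
        μ {ω | edge s(u, v) ω = true} := by
      rw [htau, hedge _ _ huv', hedge _ _ huv, hnorm]
    cases b
    · -- false case, take complements
      have hc : ∀ E' : Sym2 (Vtx d), {ω | edge E' ω = false} = {ω | edge E' ω = true}ᶜ := by
        intro E'
        ext ω
        simp
      have hms : ∀ E' : Sym2 (Vtx d), MeasurableSet {ω | edge E' ω = true} :=
        fun E' => (hmeas E') (measurableSet_singleton true)
      rw [hc, hc]
      rw [measure_compl (hms _) (measure_ne_top μ _),
        measure_compl (hms _) (measure_ne_top μ _)]
      rw [htrue]
    · exact htrue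

lemma map_Phi_eq (hmeas : ∀ e, Measurable (edge e))
    (hindep : iIndepFun edge μ) [IsProbabilityMeasure μ]
    (hedge : ∀ u v : Vtx d, u ≠ v →
      μ {ω | edge s(u, v) ω = true} = ENNReal.ofReal (1 - Real.exp (-(lam ‖u - v‖))))
    (w : Vtx d) :
    μ.map (Phi edge w) = μ.map (Phi edge 0) := by
  haveI h1 : IsProbabilityMeasure (μ.map (Phi edge w)) :=
    Measure.isProbabilityMeasure_map (measurable_Phi edge hmeas w).aemeasurable
  haveI h2 : IsProbabilityMeasure (μ.map (Phi edge 0)) :=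
    Measure.isProbabilityMeasure_map (measurable_Phi edge hmeas 0).aemeasurable
  refine ext_of_generate_finite (measurableCylinders (fun _ : ND d => Bool))
    generateFrom_measurableCylinders.symm isPiSystem_measurableCylinders ?_ ?_
  · intro t ht
    obtain ⟨s, S, hS, rfl⟩ := (mem_measurableCylinders t).mp ht
    -- decompose the cylinder into singleton cylinders
    have hdecomp : cylinder s S = ⋃ g : S, cylSingle s (g : ∀ _ : s, Bool) := by
      ext f
      simp only [mem_cylinder, mem_iUnion, cylSingle, mem_setOf_eq]
      constructor
      · intro h
        exact ⟨⟨_, h⟩, fun e => rfl⟩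
      · rintro ⟨⟨g, hg⟩, h⟩
        have : s.restrict f = g := funext fun e => h e
        rw [this]
        exact hg
    have hdisj : Pairwise (Function.onFun Disjoint fun g : S =>
        cylSingle s (g : ∀ _ : s, Bool)) := by
      intro g1 g2 hne
      rw [Function.onFun, Set.disjoint_left]
      intro f h1 h2
      apply hne
      apply Subtype.ext
      funext e
      rw [← h1 e, h2 e]
    have hw := measure_iUnion (μ := μ.map (Phi edge w)) hdisj
      (fun g => measurableSet_cylSingle s _)
    have h0 := measure_iUnion (μ := μ.map (Phi edge 0)) hdisj
      (fun g => measurableSet_cylSingle s _)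
    rw [hdecomp, hw, h0]
    congr 1
    funext g
    rw [map_Phi_cylSingle edge μ hmeas hindep w, map_Phi_cylSingle edge μ hmeas hindep 0]
    apply Finset.prod_congr rfl
    intro e _
    rw [marg_invariant edge μ lam hmeas hedge w,
      marg_invariant edge μ lam hmeas hedge 0]
  · simp

/-- Translation invariance of distance events. -/
lemma transl_edist (hmeas : ∀ e, Measurable (edge e))
    (hindep : iIndepFun edge μ) [IsProbabilityMeasure μ]
    (hedge : ∀ u v : Vtx d, u ≠ v →
      μ {ω | edge s(u, v) ω = true} = ENNReal.ofReal (1 - Real.exp (-(lam ‖u - v‖))))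
    (z xx : Vtx d) (n : ℕ) :
    μ {ω | (percGraph edge ω).edist z xx ≤ (n : ℕ∞)} =
      μ {ω | (percGraph edge ω).edist 0 (xx - z) ≤ (n : ℕ∞)} := by
  have h1 : {ω | (percGraph edge ω).edist z xx ≤ (n : ℕ∞)} =
      Phi edge z ⁻¹' FDist 0 (xx - z) n := by
    rw [Phi_preimage_FDist]
    simp
  have h2 : {ω | (percGraph edge ω).edist 0 (xx - z) ≤ (n : ℕ∞)} =
      Phi edge 0 ⁻¹' FDist 0 (xx - z) n := by
    rw [Phi_preimage_FDist]
    simp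
  rw [h1, h2]
  rw [← Measure.map_apply (measurable_Phi edge hmeas z) (measurableSet_FDist _ _ _),
    ← Measure.map_apply (measurable_Phi edge hmeas 0) (measurableSet_FDist _ _ _)]
  rw [map_Phi_eq edge μ lam hmeas hindep hedge z]

end TranslMeasure

end Stmt8Aux

namespace Stmt8Aux

open LongRangePercolation MeasureTheory ProbabilityTheory Set
set_option linter.unusedSectionVars false

section EBlemmas

variable {d : ℕ} {Ω : Type*} [MeasurableSpace Ω] (edge : Sym2 (Vtx d) → Ω → Bool)
  (μ : Measure Ω)

lemma measurableSet_percAdj (hmeas : ∀ e, Measurable (edge e)) (u v : Vtx d) :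
    MeasurableSet {ω | (percGraph edge ω).Adj u v} :=
  mE_le edge hmeas Set.univ _ (percAdj_mem_mE (I := Set.univ) edge (fun _ => mem_univ _))

lemma measurableSet_edist_le_amb (hmeas : ∀ e, Measurable (edge e)) (a b : Vtx d) (n : ℕ) :
    MeasurableSet {ω | (percGraph edge ω).edist a b ≤ (n : ℕ∞)} :=
  measurableSet_edist_le _ _ (fun u v => measurableSet_percAdj edge hmeas u v) a b n

lemma measurableSet_mem_ball (hmeas : ∀ e, Measurable (edge e)) (y : Vtx d) (n : ℕ) :
    MeasurableSet {ω | y ∈ ball edge ω n} :=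
  measurableSet_edist_le_amb edge hmeas 0 y n

lemma encard_cast_tsum {V : Type*} [Countable V] (s : Set V) :
    (s.encard : ℝ≥0∞) = ∑' y : V, s.indicator (fun _ => (1 : ℝ≥0∞)) y := by
  rw [← tsum_subtype]
  exact (ENNReal.tsum_set_one s).symm

lemma encard_ball_eq (n : ℕ) (ω : Ω) :
    ((ball edge ω n).encard : ℝ≥0∞) =
      ∑' y : Vtx d, Set.indicator {ω' | y ∈ ball edge ω' n} (fun _ => (1 : ℝ≥0∞)) ω := by
  rw [encard_cast_tsum]
  rfl

lemma measurable_encard_ball (hmeas : ∀ e, Measurable (edge e)) (n : ℕ) :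
    Measurable (fun ω => ((ball edge ω n).encard : ℝ≥0∞)) := by
  have : (fun ω => ((ball edge ω n).encard : ℝ≥0∞)) = fun ω =>
      ∑' y : Vtx d, Set.indicator {ω' | y ∈ ball edge ω' n} (fun _ => (1 : ℝ≥0∞)) ω := by
    funext ω
    exact encard_ball_eq edge n ω
  rw [this]
  exact Measurable.ennreal_tsum fun y =>
    Measurable.indicator measurable_const (measurableSet_mem_ball edge hmeas y n)

lemma EB_eq_tsum (hmeas : ∀ e, Measurable (edge e)) (n : ℕ) :
    EB μ edge n = ∑' y : Vtx d, μ {ω | (percGraph edge ω).edist 0 y ≤ (n : ℕ∞)} := by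
  rw [EB]
  have : ∀ ω, ((ball edge ω n).encard : ℝ≥0∞) =
      ∑' y : Vtx d, Set.indicator {ω' | y ∈ ball edge ω' n} (fun _ => (1 : ℝ≥0∞)) ω :=
    encard_ball_eq edge n
  rw [lintegral_congr this, lintegral_tsum fun y =>
    (Measurable.indicator measurable_const (measurableSet_mem_ball edge hmeas y n)).aemeasurable]
  congr 1
  funext y
  rw [lintegral_indicator_const (measurableSet_mem_ball edge hmeas y n) 1, one_mul]
  rfl

lemma one_le_EB [IsProbabilityMeasure μ] (n : ℕ) : 1 ≤ EB μ edge n := by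
  have h1 : ∀ ω : Ω, (1 : ℝ≥0∞) ≤ ((ball edge ω n).encard : ℝ≥0∞) := by
    intro ω
    have : (0 : Vtx d) ∈ ball edge ω n := by
      show (percGraph edge ω).edist 0 0 ≤ (n : ℕ∞)
      rw [SimpleGraph.edist_self]
      exact bot_le
    have h2 : 1 ≤ (ball edge ω n).encard := Set.one_le_encard_iff_nonempty.mpr ⟨0, this⟩
    exact_mod_cast h2
  calc (1 : ℝ≥0∞) = ∫⁻ _, 1 ∂μ := by simp
  _ ≤ EB μ edge n := lintegral_mono h1

lemma ball_infinite_null (hmeas : ∀ e, Measurable (edge e)) (n : ℕ)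
    (hEB : EB μ edge n ≠ ⊤) : μ {ω | ¬ (ball edge ω n).Finite} = 0 := by
  have hae : ∀ᵐ ω ∂μ, (fun ω => ((ball edge ω n).encard : ℝ≥0∞)) ω < ⊤ :=
    ae_lt_top (measurable_encard_ball edge hmeas n) hEB
  rw [MeasureTheory.ae_iff] at hae
  refine measure_mono_null ?_ hae
  intro ω hω
  simp only [mem_setOf_eq, not_lt, top_le_iff]
  have : (ball edge ω n).Infinite := hω
  rw [Set.encard_eq_top this]
  rfl

end EBlemmas

section NormLemmas

variable {d : ℕ}

lemma one_le_norm_sub {u v : Vtx d} (h : u ≠ v) : (1 : ℝ) ≤ ‖u - v‖ := by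
  have hne : u - v ≠ 0 := sub_ne_zero_of_ne h
  obtain ⟨j, hj⟩ : ∃ j, (u - v) j ≠ 0 := by
    by_contra hc
    push_neg at hc
    exact hne (funext hc)
  have h1 : (1 : ℝ) ≤ ‖(u - v) j‖ := by
    rw [Int.norm_eq_abs]
    exact_mod_cast Int.one_le_abs hj
  exact le_trans h1 (norm_le_pi_norm (u - v) j)

end NormLemmas

end Stmt8Aux

namespace Stmt8Aux

open LongRangePercolation MeasureTheory ProbabilityTheory Set
set_option linter.unusedSectionVars false

section EdgeBound

variable {d : ℕ} {Ω : Type*} [MeasurableSpace Ω] (edge : Sym2 (Vtx d) → Ω → Bool)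
  (μ : Measure Ω) (lam : ℝ → ℝ) (α β'' : ℝ)

lemma edge_prob_le (hα : 0 < α) (hβ'' : 0 < β'')
    (hedge : ∀ u v : Vtx d, u ≠ v →
      μ {ω | edge s(u, v) ω = true} = ENNReal.ofReal (1 - Real.exp (-(lam ‖u - v‖))))
    (hlam : ∀ r : ℝ, 1 ≤ r → lam r < α * r ^ (-β''))
    {y z : Vtx d} (hyz : y ≠ z) {r0 : ℝ} (hr0 : 0 < r0) (hr : r0 ≤ ‖y - z‖) :
    μ {ω | edge s(y, z) ω = true} ≤ ENNReal.ofReal (α * r0 ^ (-β'')) := by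
  rw [hedge y z hyz]
  apply ENNReal.ofReal_le_ofReal
  set r : ℝ := ‖y - z‖ with hrdef
  have hr1 : (1 : ℝ) ≤ r := one_le_norm_sub hyz
  have hrpos : (0 : ℝ) < r := lt_of_lt_of_le one_pos hr1
  have h1 : 1 - Real.exp (-(lam r)) ≤ lam r := by
    have := Real.add_one_le_exp (-(lam r))
    linarith
  have h2 : lam r ≤ α * r ^ (-β'') := (hlam r hr1).le
  have h3 : α * r ^ (-β'') ≤ α * r0 ^ (-β'') := by
    apply mul_le_mul_of_nonneg_left _ hα.le
    rw [Real.rpow_neg hrpos.le, Real.rpow_neg hr0.le]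
    have hb : r0 ^ β'' ≤ r ^ β'' := Real.rpow_le_rpow hr0.le hr hβ''.le
    have hbpos : (0 : ℝ) < r0 ^ β'' := Real.rpow_pos_of_pos hr0 β''
    exact inv_anti₀ hbpos hb
  linarith

end EdgeBound

section Asum

variable {d : ℕ} {Ω : Type*} [MeasurableSpace Ω] (edge : Sym2 (Vtx d) → Ω → Bool)
  (μ : Measure Ω)

lemma measurableSet_exists_adj (hmeas : ∀ e, Measurable (edge e)) (S' : Finset (Vtx d))
    (y : Vtx d) : MeasurableSet {ω | ∃ u ∈ S', (percGraph edge ω).Adj u y} := by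
  have : {ω | ∃ u ∈ S', (percGraph edge ω).Adj u y} =
      ⋃ u ∈ (↑S' : Set (Vtx d)), {ω | (percGraph edge ω).Adj u y} := by
    ext ω; simp
  rw [this]
  exact MeasurableSet.biUnion (Set.to_countable _)
    (fun u _ => measurableSet_percAdj edge hmeas u y)

lemma Asum_le (hmeas : ∀ e, Measurable (edge e)) (j : ℕ) :
    ∑' p : Finset (Vtx d) × Vtx d,
      μ ({ω | ball edge ω j = ↑p.1} ∩ {ω | ∃ u ∈ p.1, (percGraph edge ω).Adj u p.2}) ≤
      EB μ edge (j + 1) := by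
  rw [ENNReal.tsum_prod']
  have hE : ∀ S' : Finset (Vtx d), MeasurableSet {ω | ball edge ω j = ↑S'} := fun S' =>
    measurableSet_ball_eq edge _ S' j (fun u v _ => measurableSet_percAdj edge hmeas u v)
  have hF : ∀ (S' : Finset (Vtx d)) (y : Vtx d),
      MeasurableSet {ω | ∃ u ∈ S', (percGraph edge ω).Adj u y} :=
    measurableSet_exists_adj edge hmeas
  have step1 : ∀ S' : Finset (Vtx d),
      (∑' y : Vtx d, μ ({ω | ball edge ω j = ↑S'} ∩
        {ω | ∃ u ∈ S', (percGraph edge ω).Adj u y})) ≤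
      ∫⁻ ω in {ω | ball edge ω j = ↑S'}, ((ball edge ω (j + 1)).encard : ℝ≥0∞) ∂μ := by
    intro S'
    have hmeasEF : ∀ y : Vtx d, MeasurableSet ({ω | ball edge ω j = ↑S'} ∩
        {ω | ∃ u ∈ S', (percGraph edge ω).Adj u y}) := fun y => (hE S').inter (hF S' y)
    have h1 : ∀ y : Vtx d, μ ({ω | ball edge ω j = ↑S'} ∩
        {ω | ∃ u ∈ S', (percGraph edge ω).Adj u y}) =
        ∫⁻ ω, Set.indicator ({ω | ball edge ω j = ↑S'} ∩
          {ω | ∃ u ∈ S', (percGraph edge ω).Adj u y}) (fun _ => (1 : ℝ≥0∞)) ω ∂μ := by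
      intro y
      rw [lintegral_indicator_const (hmeasEF y) 1, one_mul]
    calc (∑' y : Vtx d, μ ({ω | ball edge ω j = ↑S'} ∩
          {ω | ∃ u ∈ S', (percGraph edge ω).Adj u y}))
        = ∫⁻ ω, (∑' y : Vtx d, Set.indicator ({ω | ball edge ω j = ↑S'} ∩
            {ω | ∃ u ∈ S', (percGraph edge ω).Adj u y}) (fun _ => (1 : ℝ≥0∞)) ω) ∂μ := by
          rw [lintegral_tsum fun y =>
            (Measurable.indicator measurable_const (hmeasEF y)).aemeasurable]
          exact tsum_congr h1
      _ ≤ ∫⁻ ω, Set.indicator {ω | ball edge ω j = ↑S'}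
            (fun ω' => ((ball edge ω' (j + 1)).encard : ℝ≥0∞)) ω ∂μ := by
          apply lintegral_mono
          intro ω
          beta_reduce
          by_cases hω : ball edge ω j = ↑S'
          · have hmem : ω ∈ {ω | ball edge ω j = ↑S'} := hω
            rw [Set.indicator_of_mem hmem]
            have hterm : ∀ y : Vtx d, Set.indicator ({ω | ball edge ω j = ↑S'} ∩
                {ω | ∃ u ∈ S', (percGraph edge ω).Adj u y}) (fun _ => (1 : ℝ≥0∞)) ω =
                Set.indicator {y' : Vtx d | ∃ u ∈ S', (percGraph edge ω).Adj u y'}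
                  (fun _ => (1 : ℝ≥0∞)) y := by
              intro y
              by_cases hy : ∃ u ∈ S', (percGraph edge ω).Adj u y
              · rw [Set.indicator_of_mem (show ω ∈ {ω | ball edge ω j = ↑S'} ∩
                    {ω | ∃ u ∈ S', (percGraph edge ω).Adj u y} from ⟨hmem, hy⟩),
                  Set.indicator_of_mem
                    (show y ∈ {y' : Vtx d | ∃ u ∈ S', (percGraph edge ω).Adj u y'} from hy)]
              · rw [Set.indicator_of_notMem (show ω ∉ {ω | ball edge ω j = ↑S'} ∩
                    {ω | ∃ u ∈ S', (percGraph edge ω).Adj u y} from fun hc => hy hc.2),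
                  Set.indicator_of_notMem
                    (show y ∉ {y' : Vtx d | ∃ u ∈ S', (percGraph edge ω).Adj u y'} from hy)]
            rw [tsum_congr hterm, ← encard_cast_tsum]
            have hsub : {y' : Vtx d | ∃ u ∈ S', (percGraph edge ω).Adj u y'} ⊆
                ball edge ω (j + 1) := by
              rintro y' ⟨u, hu, hadj⟩
              have hu' : u ∈ ball edge ω j := by
                rw [hω]
                exact_mod_cast hu
              exact mem_ball_succ_of_adj edge ω j hu' hadj
            exact_mod_cast Set.encard_mono hsub
          · have hnmem : ω ∉ {ω | ball edge ω j = ↑S'} := hω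
            rw [Set.indicator_of_notMem hnmem]
            have : ∀ y : Vtx d, Set.indicator ({ω | ball edge ω j = ↑S'} ∩
                {ω | ∃ u ∈ S', (percGraph edge ω).Adj u y}) (fun _ => (1 : ℝ≥0∞)) ω = 0 :=
              fun y => Set.indicator_of_notMem (fun hc => hnmem hc.1) _
            rw [tsum_congr this]
            simp
      _ = ∫⁻ ω in {ω | ball edge ω j = ↑S'}, ((ball edge ω (j + 1)).encard : ℝ≥0∞) ∂μ := by
          rw [lintegral_indicator (hE S')]
  have hdisj : Pairwise (Function.onFun Disjoint
      (fun S' : Finset (Vtx d) => {ω | ball edge ω j = ↑S'})) := by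
    intro a b hne
    rw [Function.onFun, Set.disjoint_left]
    intro ω ha hb
    exact hne (Finset.coe_injective ((Set.mem_setOf_eq ▸ ha).symm.trans hb))
  calc (∑' S' : Finset (Vtx d), ∑' y : Vtx d, μ ({ω | ball edge ω j = ↑S'} ∩
        {ω | ∃ u ∈ S', (percGraph edge ω).Adj u y}))
      ≤ ∑' S' : Finset (Vtx d),
          ∫⁻ ω in {ω | ball edge ω j = ↑S'}, ((ball edge ω (j + 1)).encard : ℝ≥0∞) ∂μ :=
        ENNReal.tsum_le_tsum step1
    _ = ∫⁻ ω in ⋃ S' : Finset (Vtx d), {ω | ball edge ω j = ↑S'},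
          ((ball edge ω (j + 1)).encard : ℝ≥0∞) ∂μ :=
        (lintegral_iUnion hE hdisj _).symm
    _ ≤ ∫⁻ ω, ((ball edge ω (j + 1)).encard : ℝ≥0∞) ∂μ := setLIntegral_le_lintegral _ _
    _ = EB μ edge (j + 1) := rfl

end Asum

end Stmt8Aux

namespace Stmt8Aux

open LongRangePercolation MeasureTheory ProbabilityTheory Set
set_option linter.unusedSectionVars false

section Cover

variable {d : ℕ} {Ω : Type*}

lemma cover (edge : Sym2 (Vtx d) → Ω → Bool) (ω : Ω) (k : ℕ) (hk : 1 ≤ k) (x : Vtx d)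
    (hx : x ≠ 0) (hfin : ∀ n, n < k → (ball edge ω n).Finite)
    (hω : (percGraph edge ω).edist 0 x ≤ (k : ℕ∞)) :
    (∃ z : Vtx d, (‖x‖ / k ≤ ‖(0 : Vtx d) - z‖ ∧ z ≠ 0) ∧ edge s(0, z) ω = true ∧
      (restGraph edge ω ({(0 : Vtx d)}ᶜ)).edist z x ≤ ((k - 1 : ℕ) : ℕ∞)) ∨
    (∃ i, 2 ≤ i ∧ i ≤ k ∧ ∃ (S' : Finset (Vtx d)) (y z : Vtx d),
      (y ∉ S' ∧ z ∉ S' ∧ z ≠ y ∧ ‖x‖ / k ≤ ‖y - z‖) ∧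
      ball edge ω (i - 2) = ↑S' ∧ (∃ u ∈ S', (percGraph edge ω).Adj u y) ∧
      edge s(y, z) ω = true ∧
      (restGraph edge ω ((↑S' ∪ {y})ᶜ)).edist z x ≤ ((k - i : ℕ) : ℕ∞)) := by
  classical
  set G := percGraph edge ω with hG
  have hne : G.edist 0 x ≠ ⊤ := fun htop => by
    rw [htop] at hω
    exact (ENat.coe_lt_top k).not_ge hω
  obtain ⟨w, hw⟩ := (G.reachable_of_edist_ne_top hne).exists_walk_length_eq_edist
  set m := w.length with hm
  have hmk : m ≤ k := by
    have : (m : ℕ∞) ≤ (k : ℕ∞) := hw ▸ hω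
    exact_mod_cast this
  have hm1 : 1 ≤ m := by
    by_contra h
    push_neg at h
    have hm0 : m = 0 := by omega
    have h0 : G.edist 0 x = 0 := by
      rw [← hw, hm0]
      rfl
    exact hx (SimpleGraph.edist_eq_zero_iff.mp h0).symm
  set v : ℕ → Vtx d := fun j => w.getVert j with hv
  have hv0 : v 0 = 0 := w.getVert_zero
  have hvm : v m = x := w.getVert_length
  have hadj : ∀ j, j < m → G.Adj (v j) (v (j + 1)) := fun j hj => w.adj_getVert_succ hj
  -- distance bounds along the walk
  have hle1 : ∀ j, j ≤ m → G.edist 0 (v j) ≤ (j : ℕ∞) := by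
    intro j hj
    rw [edist_le_iff_exists_chain]
    refine ⟨fun t => v (min t j), by simp [Nat.zero_min, hv0], by simp, ?_⟩
    intro t ht
    beta_reduce
    rw [show min t j = t from by omega, show min (t + 1) j = t + 1 from by omega]
    exact Or.inr (hadj t (by omega))
  have hle2 : ∀ j, j ≤ m → G.edist (v j) x ≤ ((m - j : ℕ) : ℕ∞) := by
    intro j hj
    rw [edist_le_iff_exists_chain]
    refine ⟨fun t => v (j + min t (m - j)), by simp [Nat.zero_min], by
      beta_reduce
      rw [min_self, show j + (m - j) = m from by omega, hvm], ?_⟩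
    intro t ht
    beta_reduce
    rw [show min t (m - j) = t from by omega,
      show min (t + 1) (m - j) = t + 1 from by omega]
    exact Or.inr (hadj (j + t) (by omega))
  have heq : ∀ j, j ≤ m → G.edist 0 (v j) = (j : ℕ∞) := by
    intro j hj
    refine le_antisymm (hle1 j hj) ?_
    by_contra hlt
    push_neg at hlt
    have hne' : G.edist 0 (v j) ≠ ⊤ := ne_top_of_lt hlt
    lift G.edist 0 (v j) to ℕ using hne' with n hn
    have hnj : n < j := by exact_mod_cast hlt
    have htri : G.edist 0 x ≤ ((n + (m - j) : ℕ) : ℕ∞) := by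
      calc G.edist 0 x ≤ G.edist 0 (v j) + G.edist (v j) x := G.edist_triangle
      _ ≤ (n : ℕ∞) + ((m - j : ℕ) : ℕ∞) := add_le_add (le_of_eq hn.symm) (hle2 j hj)
      _ = ((n + (m - j) : ℕ) : ℕ∞) := by push_cast; rfl
    rw [← hw] at htri
    have : m ≤ n + (m - j) := by exact_mod_cast htri
    omega
  -- a long step exists
  have hxnorm : (0 : ℝ) < ‖x‖ := norm_pos_iff.mpr hx
  have hstepex : ∃ j, j < m ∧ ‖x‖ / k ≤ ‖v (j + 1) - v j‖ := by
    by_contra hc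
    push_neg at hc
    have hsum : ‖x‖ ≤ ∑ j ∈ Finset.range m, ‖v (j + 1) - v j‖ := by
      have htel : ∑ j ∈ Finset.range m, (v (j + 1) - v j) = v m - v 0 :=
        Finset.sum_range_sub v m
      calc ‖x‖ = ‖v m - v 0‖ := by rw [hvm, hv0, sub_zero]
      _ = ‖∑ j ∈ Finset.range m, (v (j + 1) - v j)‖ := by rw [htel]
      _ ≤ ∑ j ∈ Finset.range m, ‖v (j + 1) - v j‖ := norm_sum_le _ _
    have hlt : ∑ j ∈ Finset.range m, ‖v (j + 1) - v j‖ <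
        ∑ _j ∈ Finset.range m, ‖x‖ / k := by
      apply Finset.sum_lt_sum_of_nonempty
      · exact Finset.nonempty_range_iff.mpr (by omega)
      · intro j hj
        exact hc j (Finset.mem_range.mp hj)
    rw [Finset.sum_const, Finset.card_range, nsmul_eq_mul] at hlt
    have hkpos : (0 : ℝ) < (k : ℝ) := by exact_mod_cast hk
    have hmk' : (m : ℝ) ≤ (k : ℝ) := by exact_mod_cast hmk
    have h2 : (m : ℝ) * (‖x‖ / k) ≤ ‖x‖ := by
      calc (m : ℝ) * (‖x‖ / k) ≤ (k : ℝ) * (‖x‖ / k) :=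
        mul_le_mul_of_nonneg_right hmk' (div_nonneg hxnorm.le hkpos.le)
      _ = ‖x‖ := mul_div_cancel₀ _ hkpos.ne'
    linarith
  obtain ⟨j, hjm, hstep⟩ := hstepex
  set i := j + 1 with hi
  -- the useful facts about the suffix vertices
  by_cases hi1 : i = 1
  · -- case i = 1 : long first step
    left
    have hj0 : j = 0 := by omega
    subst hj0
    refine ⟨v 1, ⟨?_, ?_⟩, ?_, ?_⟩
    · have : ‖(0 : Vtx d) - v 1‖ = ‖v (0 + 1) - v 0‖ := by
        rw [hv0, norm_sub_rev, sub_zero]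
      rw [this]
      exact hstep
    · intro hz
      have h1 := heq 1 hm1
      rw [hz] at h1
      rw [SimpleGraph.edist_self] at h1
      norm_num at h1
    · have := hadj 0 (by omega)
      rw [hv0] at this
      exact this.2
    · rw [edist_le_iff_exists_chain]
      refine ⟨fun t => v (1 + min t (m - 1)), by simp [Nat.zero_min], ?_, ?_⟩
      · beta_reduce
        rw [show min (k - 1) (m - 1) = m - 1 from by omega,
          show 1 + (m - 1) = m from by omega, hvm]
      · intro t ht
        beta_reduce
        by_cases htm : t < m - 1
        · rw [show min t (m - 1) = t from by omega,
            show min (t + 1) (m - 1) = t + 1 from by omega]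
          refine Or.inr ⟨?_, ?_, ?_⟩
          · -- v (1 + t) ≠ 0
            intro hmem
            have h1 := heq (1 + t) (by omega)
            rw [show v (1 + t) = 0 from hmem, SimpleGraph.edist_self] at h1
            have : (1 + t : ℕ) = 0 := by exact_mod_cast h1.symm
            omega
          · intro hmem
            have h1 := heq (1 + (t + 1)) (by omega)
            rw [show v (1 + (t + 1)) = 0 from hmem, SimpleGraph.edist_self] at h1
            have : (1 + (t + 1) : ℕ) = 0 := by exact_mod_cast h1.symm
            omega
          · exact (show 1 + t + 1 = 1 + (t + 1) from by omega) ▸ hadj (1 + t) (by omega)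
        · rw [show min t (m - 1) = m - 1 from by omega,
            show min (t + 1) (m - 1) = m - 1 from by omega]
          exact Or.inl rfl
  · -- case i ≥ 2
    right
    have hi2 : 2 ≤ i := by omega
    have him : i ≤ m := by omega
    have hfin' : (ball edge ω (i - 2)).Finite := hfin (i - 2) (by omega)
    set S' : Finset (Vtx d) := hfin'.toFinset with hS'
    set y := v j with hy
    set z := v (j + 1) with hz
    have hball : ball edge ω (i - 2) = ↑S' := (Set.Finite.coe_toFinset hfin').symm
    have hedisty : G.edist 0 y = ((i - 1 : ℕ) : ℕ∞) := by
      rw [show (i - 1 : ℕ) = j from by omega]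
      exact heq j (by omega)
    have hedistz : G.edist 0 z = (i : ℕ∞) := by
      rw [show (i : ℕ) = j + 1 from rfl]
      exact heq (j + 1) (by omega)
    have hmemS' : ∀ u : Vtx d, u ∈ S' ↔ G.edist 0 u ≤ ((i - 2 : ℕ) : ℕ∞) := by
      intro u
      rw [hS', Set.Finite.mem_toFinset]
      rfl
    have hynS : y ∉ S' := by
      intro hc
      rw [hmemS', hedisty] at hc
      have : (i - 1 : ℕ) ≤ (i - 2 : ℕ) := by exact_mod_cast hc
      omega
    have hznS : z ∉ S' := by
      intro hc
      rw [hmemS', hedistz] at hc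
      have : (i : ℕ) ≤ (i - 2 : ℕ) := by exact_mod_cast hc
      omega
    have hzy : z ≠ y := by
      intro hc
      rw [hc, hedisty] at hedistz
      have : (i - 1 : ℕ) = i := by exact_mod_cast hedistz
      omega
    refine ⟨i, hi2, by omega, S', y, z, ⟨hynS, hznS, hzy, ?_⟩, hball, ?_, ?_, ?_⟩
    · rw [norm_sub_rev]
      exact hstep
    · -- ∃ u ∈ S', Adj u y
      refine ⟨v (i - 2), ?_, ?_⟩
      · rw [hmemS']
        rw [heq (i - 2) (by omega)]
      · have := hadj (i - 2) (by omega)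
        rw [show i - 2 + 1 = j from by omega] at this
        exact this
    · exact (hadj j hjm).2
    · -- the suffix chain avoiding S' ∪ {y}
      rw [edist_le_iff_exists_chain]
      have hmemW : ∀ s, i ≤ s → s ≤ m → v s ∈ ((↑S' ∪ {y} : Set (Vtx d))ᶜ) := by
        intro s hs1 hs2
        simp only [Set.mem_compl_iff, Set.mem_union, Set.mem_singleton_iff]
        push_neg
        constructor
        · intro hc
          have : (s : ℕ∞) ≤ ((i - 2 : ℕ) : ℕ∞) := by
            rw [← heq s (by omega)]
            exact (hmemS' _).mp (by exact_mod_cast hc)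
          have : s ≤ i - 2 := by exact_mod_cast this
          omega
        · intro hc
          have := heq s (by omega)
          rw [hc, hedisty] at this
          have : (i - 1 : ℕ) = s := by exact_mod_cast this
          omega
      refine ⟨fun t => v (i + min t (m - i)), by
        beta_reduce
        rw [Nat.zero_min, Nat.add_zero, hi, hz], ?_, ?_⟩
      · beta_reduce
        rw [show min (k - i) (m - i) = m - i from by omega,
          show i + (m - i) = m from by omega, hvm]
      · intro t ht
        beta_reduce
        by_cases htm : t < m - i
        · rw [show min t (m - i) = t from by omega,
            show min (t + 1) (m - i) = t + 1 from by omega]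
          refine Or.inr ⟨hmemW (i + t) (by omega) (by omega), ?_, ?_⟩
          · exact (show i + t + 1 = i + (t + 1) from by omega) ▸
              hmemW (i + t + 1) (by omega) (by omega)
          · exact (show i + t + 1 = i + (t + 1) from by omega) ▸ hadj (i + t) (by omega)
        · rw [show min t (m - i) = m - i from by omega,
            show min (t + 1) (m - i) = m - i from by omega]
          exact Or.inl rfl

end Cover

end Stmt8Aux

open LongRangePercolation Stmt8Aux MeasureTheory ProbabilityTheory Set

/-- For long-range percolation on `ℤ^d` with `λ(r) < α r^(-β'')` for all
`r ≥ 1`: for every `k ≥ 1` and every `x ≠ 0`,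
`P(D(0,x) ≤ k) ≤ Σ_{i=1}^k E|B_{i-1}| E|B_{k-i}| α (‖x‖/k)^(-β'')`. -/
theorem stmt8 {d : ℕ} {Ω : Type*} [MeasurableSpace Ω] (μ : Measure Ω)
    (edge : Sym2 (Vtx d) → Ω → Bool) (lam : ℝ → ℝ) (α β'' : ℝ)
    (hα : 0 < α) (hβ'' : 0 < β'')
    (hmodel : IsLRPModel d μ edge lam)
    (hub : ∀ r : ℝ, 1 ≤ r → lam r < α * r ^ (-β'')) :
    ∀ k : ℕ, 1 ≤ k → ∀ x : Vtx d, x ≠ 0 →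
      μ {ω | (percGraph edge ω).edist 0 x ≤ (k : ℕ∞)} ≤
        ∑ i ∈ Finset.Icc 1 k,
          EB μ edge (i - 1) * EB μ edge (k - i) *
            ENNReal.ofReal (α * (‖x‖ / (k : ℝ)) ^ (-β'')) := by
  classical
  intro k hk x hx
  haveI hPM : IsProbabilityMeasure μ := hmodel.prob
  have hmeas := hmodel.meas
  have hindep := hmodel.indep
  have hedge := hmodel.edge_prob
  set c0 : ℝ≥0∞ := ENNReal.ofReal (α * (‖x‖ / (k : ℝ)) ^ (-β'')) with hc0
  have hxpos : (0 : ℝ) < ‖x‖ := norm_pos_iff.mpr hx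
  have hkpos : (0 : ℝ) < (k : ℝ) := by exact_mod_cast hk
  have hr0pos : (0 : ℝ) < ‖x‖ / (k : ℝ) := div_pos hxpos hkpos
  have hc0ne : c0 ≠ 0 := by
    rw [hc0]
    refine (ENNReal.ofReal_pos.mpr ?_).ne'
    have := Real.rpow_pos_of_pos hr0pos (-β'')
    positivity
  have hEBne : ∀ n : ℕ, EB μ edge n ≠ 0 := fun n =>
    (lt_of_lt_of_le one_pos (one_le_EB edge μ n)).ne'
  -- the translated distance probability
  have hq : ∀ (n : ℕ) (z : Vtx d),
      μ {ω | (percGraph edge ω).edist z x ≤ (n : ℕ∞)} =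
      μ {ω | (percGraph edge ω).edist 0 (x - z) ≤ (n : ℕ∞)} := fun n z =>
    transl_edist edge μ lam hmeas hindep hedge z x n
  have hqsum : ∀ n : ℕ,
      (∑' z : Vtx d, μ {ω | (percGraph edge ω).edist 0 (x - z) ≤ (n : ℕ∞)}) =
      EB μ edge n := by
    intro n
    rw [EB_eq_tsum edge μ hmeas n]
    have := (Equiv.subLeft x).tsum_eq
      (fun w : Vtx d => μ {ω | (percGraph edge ω).edist 0 w ≤ (n : ℕ∞)})
    rw [← this]
    apply tsum_congr
    intro z
    congr
  by_cases htop : EB μ edge (k - 1) = ⊤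
  · -- trivial case: the right-hand side is infinite
    have hterm : EB μ edge (k - 1) * EB μ edge (k - k) * c0 = ⊤ := by
      rw [htop, ENNReal.top_mul (hEBne _), ENNReal.top_mul hc0ne]
    calc μ {ω | (percGraph edge ω).edist 0 x ≤ (k : ℕ∞)} ≤ ⊤ := le_top
    _ ≤ ∑ i ∈ Finset.Icc 1 k, EB μ edge (i - 1) * EB μ edge (k - i) * c0 := by
        rw [← hterm]
        exact Finset.single_le_sum (f := fun i => EB μ edge (i - 1) * EB μ edge (k - i) * c0)
          (fun _ _ => bot_le) (by simp [Finset.mem_Icc, hk])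
  · have hGnull : μ {ω | ¬ (ball edge ω (k - 1)).Finite} = 0 :=
      ball_infinite_null edge μ hmeas (k - 1) htop
    set E1 : Vtx d → Set Ω := fun z =>
      {_ω | ‖x‖ / (k : ℝ) ≤ ‖(0 : Vtx d) - z‖ ∧ z ≠ 0} ∩
        ({ω | edge s(0, z) ω = true} ∩
          {ω | (restGraph edge ω ({(0 : Vtx d)}ᶜ)).edist z x ≤ ((k - 1 : ℕ) : ℕ∞)}) with hE1
    set E2 : ℕ → Finset (Vtx d) × Vtx d × Vtx d → Set Ω := fun i p =>
      {_ω | p.2.1 ∉ p.1 ∧ p.2.2 ∉ p.1 ∧ p.2.2 ≠ p.2.1 ∧ ‖x‖ / (k : ℝ) ≤ ‖p.2.1 - p.2.2‖} ∩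
        (({ω | ball edge ω (i - 2) = ↑p.1} ∩
          {ω | ∃ u ∈ p.1, (percGraph edge ω).Adj u p.2.1}) ∩
         ({ω | edge s(p.2.1, p.2.2) ω = true} ∩
          {ω | (restGraph edge ω ((↑p.1 ∪ {p.2.1})ᶜ)).edist p.2.2 x ≤ ((k - i : ℕ) : ℕ∞)}))
      with hE2
    have hincl : {ω | (percGraph edge ω).edist 0 x ≤ (k : ℕ∞)} ⊆
        {ω | ¬ (ball edge ω (k - 1)).Finite} ∪
          ((⋃ z, E1 z) ∪ ⋃ i ∈ Finset.Icc 2 k, ⋃ p, E2 i p) := by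
      intro ω hω
      by_cases hfin : (ball edge ω (k - 1)).Finite
      · right
        have hfin' : ∀ n, n < k → (ball edge ω n).Finite := fun n hn =>
          hfin.subset (ball_mono edge ω (by omega))
        rcases cover edge ω k hk x hx hfin' hω with
          ⟨z, hg, he, hr⟩ | ⟨i, hi2, hik, S', y, z, hg, hb, hu, he, hr⟩
        · left
          exact mem_iUnion.mpr ⟨z, hg, he, hr⟩
        · right
          refine mem_iUnion₂.mpr ⟨i, by simp [Finset.mem_Icc, hi2, hik], ?_⟩
          exact mem_iUnion.mpr ⟨(S', y, z), hg, ⟨hb, hu⟩, he, hr⟩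
      · left
        exact hfin
    -- bound for the `i = 1` part
    have hE1bound : μ (⋃ z, E1 z) ≤ EB μ edge (k - 1) * c0 := by
      have hpt : ∀ z : Vtx d, μ (E1 z) ≤
          c0 * μ {ω | (percGraph edge ω).edist 0 (x - z) ≤ ((k - 1 : ℕ) : ℕ∞)} := by
        intro z
        by_cases hguard : ‖x‖ / (k : ℝ) ≤ ‖(0 : Vtx d) - z‖ ∧ z ≠ 0
        · set B : Set Ω := {ω | edge s(0, z) ω = true} with hB
          set C : Set Ω :=
            {ω | (restGraph edge ω ({(0 : Vtx d)}ᶜ)).edist z x ≤ ((k - 1 : ℕ) : ℕ∞)} with hC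
          have hsub : E1 z ⊆ (Set.univ ∩ B) ∩ C := by
            rintro ω ⟨_, h2, h3⟩
            exact ⟨⟨trivial, h2⟩, h3⟩
          have hmul : μ ((Set.univ ∩ B) ∩ C) = μ Set.univ * μ B * μ C := by
            refine meas_inter3 edge hmeas hindep
              (I1 := (∅ : Set (Sym2 (Vtx d)))) (I2 := {s(0, z)})
              (I3 := {e | ∀ a ∈ e, a ∈ ({(0 : Vtx d)}ᶜ : Set (Vtx d))})
              (by simp) (by simp) ?_ ?_ ?_ ?_
            · rw [Set.disjoint_left]
              rintro e rfl hmem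
              have h0 : (0 : Vtx d) ∈ s((0 : Vtx d), z) := Sym2.mem_mk_left _ _
              have := hmem _ h0
              simp at this
            · exact @MeasurableSet.univ Ω (mE edge ∅)
            · exact cyl_mem_mE edge (mem_singleton _)
            · refine measurableSet_edist_le (mE edge _)
                (fun ω => restGraph edge ω ({(0 : Vtx d)}ᶜ)) ?_ z x (k - 1)
              intro u v
              refine restAdj_mem_mE edge _ ?_
              intro hu hv _
              intro a ha
              rcases Sym2.mem_iff.mp ha with rfl | rfl
              · exact hu
              · exact hv
          have hBle : μ B ≤ c0 := by
            rw [hc0]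
            refine edge_prob_le edge μ lam α β'' hα hβ'' hedge hub ?_ hr0pos hguard.1
            exact fun h => hguard.2 h.symm
          have hCle : μ C ≤
              μ {ω | (percGraph edge ω).edist 0 (x - z) ≤ ((k - 1 : ℕ) : ℕ∞)} := by
            rw [← hq]
            apply measure_mono
            intro ω hω
            refine le_trans (SimpleGraph.edist_anti ?_) hω
            intro a b hab
            exact hab.2.2
          calc μ (E1 z) ≤ μ ((Set.univ ∩ B) ∩ C) := measure_mono hsub
          _ = μ Set.univ * μ B * μ C := hmul
          _ = μ B * μ C := by rw [measure_univ, one_mul]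
          _ ≤ c0 * μ {ω | (percGraph edge ω).edist 0 (x - z) ≤ ((k - 1 : ℕ) : ℕ∞)} :=
            mul_le_mul' hBle hCle
        · have : E1 z ⊆ ∅ := by
            rintro ω ⟨h1, _⟩
            exact hguard h1
          calc μ (E1 z) ≤ μ (∅ : Set Ω) := measure_mono this
          _ = 0 := measure_empty
          _ ≤ _ := bot_le
      calc μ (⋃ z, E1 z) ≤ ∑' z : Vtx d, μ (E1 z) := measure_iUnion_le _
      _ ≤ ∑' z : Vtx d,
            c0 * μ {ω | (percGraph edge ω).edist 0 (x - z) ≤ ((k - 1 : ℕ) : ℕ∞)} :=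
          ENNReal.tsum_le_tsum hpt
      _ = c0 * EB μ edge (k - 1) := by rw [ENNReal.tsum_mul_left, hqsum]
      _ = EB μ edge (k - 1) * c0 := mul_comm _ _
    -- bound for the `i ≥ 2` parts
    have hE2bound : ∀ i ∈ Finset.Icc 2 k,
        μ (⋃ p, E2 i p) ≤ EB μ edge (i - 1) * EB μ edge (k - i) * c0 := by
      intro i hi
      rw [Finset.mem_Icc] at hi
      have hpt : ∀ p : Finset (Vtx d) × Vtx d × Vtx d, μ (E2 i p) ≤
          μ ({ω | ball edge ω (i - 2) = ↑p.1} ∩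
              {ω | ∃ u ∈ p.1, (percGraph edge ω).Adj u p.2.1}) *
            (c0 * μ {ω | (percGraph edge ω).edist 0 (x - p.2.2) ≤ ((k - i : ℕ) : ℕ∞)}) := by
        rintro ⟨S', y, z⟩
        by_cases hguard : y ∉ S' ∧ z ∉ S' ∧ z ≠ y ∧ ‖x‖ / (k : ℝ) ≤ ‖y - z‖
        · set A : Set Ω := {ω | ball edge ω (i - 2) = ↑S'} ∩
            {ω | ∃ u ∈ S', (percGraph edge ω).Adj u y} with hA
          set B : Set Ω := {ω | edge s(y, z) ω = true} with hB
          set C : Set Ω :=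
            {ω | (restGraph edge ω ((↑S' ∪ {y})ᶜ)).edist z x ≤ ((k - i : ℕ) : ℕ∞)} with hC
          have hsub : E2 i (S', y, z) ⊆ (A ∩ B) ∩ C := by
            rintro ω ⟨_, hA', hB', hC'⟩
            exact ⟨⟨hA', hB'⟩, hC'⟩
          have hmul : μ ((A ∩ B) ∩ C) = μ A * μ B * μ C := by
            refine meas_inter3 edge hmeas hindep
              (I1 := {e : Sym2 (Vtx d) | ∃ a ∈ e, a ∈ (↑S' : Set (Vtx d))})
              (I2 := {s(y, z)})
              (I3 := {e : Sym2 (Vtx d) | ∀ a ∈ e, a ∈ ((↑S' ∪ {y} : Set (Vtx d))ᶜ)})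
              ?_ ?_ ?_ ?_ ?_ ?_
            · rw [Set.disjoint_left]
              rintro e ⟨a, ha, haS⟩ rfl
              rcases Sym2.mem_iff.mp ha with rfl | rfl
              · exact hguard.1 (by exact_mod_cast haS)
              · exact hguard.2.1 (by exact_mod_cast haS)
            · rw [Set.disjoint_left]
              rintro e ⟨a, ha, haS⟩ hall
              exact (hall a ha) (Or.inl haS)
            · rw [Set.disjoint_left]
              rintro e rfl hall
              have hy : y ∈ s(y, z) := Sym2.mem_mk_left _ _
              exact (hall y hy) (Or.inr rfl)
            · refine MeasurableSet.inter ?_ ?_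
              · refine measurableSet_ball_eq edge _ S' (i - 2) ?_
                intro u v hu
                refine percAdj_mem_mE edge ?_
                intro huv
                exact ⟨u, Sym2.mem_mk_left _ _, by exact_mod_cast hu⟩
              · have : {ω | ∃ u ∈ S', (percGraph edge ω).Adj u y} =
                    ⋃ u ∈ (↑S' : Set (Vtx d)), {ω | (percGraph edge ω).Adj u y} := by
                  ext ω; simp
                rw [this]
                refine MeasurableSet.biUnion (Set.to_countable _) ?_
                intro u hu
                refine percAdj_mem_mE edge ?_
                intro huv
                exact ⟨u, Sym2.mem_mk_left _ _, by exact_mod_cast hu⟩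
            · exact cyl_mem_mE edge (mem_singleton _)
            · refine measurableSet_edist_le (mE edge _)
                (fun ω => restGraph edge ω ((↑S' ∪ {y})ᶜ)) ?_ z x (k - i)
              intro u v
              refine restAdj_mem_mE edge _ ?_
              intro hu hv _
              intro a ha
              rcases Sym2.mem_iff.mp ha with rfl | rfl
              · exact hu
              · exact hv
          have hBle : μ B ≤ c0 := by
            rw [hc0]
            refine edge_prob_le edge μ lam α β'' hα hβ'' hedge hub ?_ hr0pos hguard.2.2.2
            exact fun h => hguard.2.2.1 h.symm
          have hCle : μ C ≤
              μ {ω | (percGraph edge ω).edist 0 (x - z) ≤ ((k - i : ℕ) : ℕ∞)} := by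
            rw [← hq]
            apply measure_mono
            intro ω hω
            refine le_trans (SimpleGraph.edist_anti ?_) hω
            intro a b hab
            exact hab.2.2
          calc μ (E2 i (S', y, z)) ≤ μ ((A ∩ B) ∩ C) := measure_mono hsub
          _ = μ A * μ B * μ C := hmul
          _ = μ A * (μ B * μ C) := mul_assoc _ _ _
          _ ≤ μ A * (c0 * μ {ω | (percGraph edge ω).edist 0 (x - z) ≤
                ((k - i : ℕ) : ℕ∞)}) := mul_le_mul' le_rfl (mul_le_mul' hBle hCle)
        · have : E2 i (S', y, z) ⊆ ∅ := by
            rintro ω ⟨h1, _⟩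
            exact hguard h1
          calc μ (E2 i (S', y, z)) ≤ μ (∅ : Set Ω) := measure_mono this
          _ = 0 := measure_empty
          _ ≤ _ := bot_le
      calc μ (⋃ p, E2 i p) ≤ ∑' p, μ (E2 i p) := measure_iUnion_le _
      _ ≤ ∑' p : Finset (Vtx d) × Vtx d × Vtx d,
            μ ({ω | ball edge ω (i - 2) = ↑p.1} ∩
                {ω | ∃ u ∈ p.1, (percGraph edge ω).Adj u p.2.1}) *
              (c0 * μ {ω | (percGraph edge ω).edist 0 (x - p.2.2) ≤ ((k - i : ℕ) : ℕ∞)}) :=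
          ENNReal.tsum_le_tsum hpt
      _ = ∑' S' : Finset (Vtx d), ∑' yz : Vtx d × Vtx d,
            μ ({ω | ball edge ω (i - 2) = ↑S'} ∩
                {ω | ∃ u ∈ S', (percGraph edge ω).Adj u yz.1}) *
              (c0 * μ {ω | (percGraph edge ω).edist 0 (x - yz.2) ≤ ((k - i : ℕ) : ℕ∞)}) :=
          ENNReal.tsum_prod'
      _ = ∑' S' : Finset (Vtx d), ∑' y : Vtx d, ∑' z : Vtx d,
            μ ({ω | ball edge ω (i - 2) = ↑S'} ∩
                {ω | ∃ u ∈ S', (percGraph edge ω).Adj u y}) *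
              (c0 * μ {ω | (percGraph edge ω).edist 0 (x - z) ≤ ((k - i : ℕ) : ℕ∞)}) := by
          apply tsum_congr
          intro S'
          exact ENNReal.tsum_prod'
      _ = (∑' S' : Finset (Vtx d), ∑' y : Vtx d,
            μ ({ω | ball edge ω (i - 2) = ↑S'} ∩
                {ω | ∃ u ∈ S', (percGraph edge ω).Adj u y})) *
            (c0 * EB μ edge (k - i)) := by
          have hinner : ∀ (S' : Finset (Vtx d)) (y : Vtx d),
              (∑' z : Vtx d,
                μ ({ω | ball edge ω (i - 2) = ↑S'} ∩
                    {ω | ∃ u ∈ S', (percGraph edge ω).Adj u y}) *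
                  (c0 * μ {ω | (percGraph edge ω).edist 0 (x - z) ≤ ((k - i : ℕ) : ℕ∞)})) =
              μ ({ω | ball edge ω (i - 2) = ↑S'} ∩
                  {ω | ∃ u ∈ S', (percGraph edge ω).Adj u y}) * (c0 * EB μ edge (k - i)) := by
            intro S' y
            rw [ENNReal.tsum_mul_left, ENNReal.tsum_mul_left, hqsum (k - i)]
          have h1 : (∑' S' : Finset (Vtx d), ∑' y : Vtx d, ∑' z : Vtx d,
              μ ({ω | ball edge ω (i - 2) = ↑S'} ∩
                  {ω | ∃ u ∈ S', (percGraph edge ω).Adj u y}) *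
                (c0 * μ {ω | (percGraph edge ω).edist 0 (x - z) ≤ ((k - i : ℕ) : ℕ∞)})) =
              ∑' S' : Finset (Vtx d), ∑' y : Vtx d,
                μ ({ω | ball edge ω (i - 2) = ↑S'} ∩
                    {ω | ∃ u ∈ S', (percGraph edge ω).Adj u y}) * (c0 * EB μ edge (k - i)) :=
            tsum_congr fun S' => tsum_congr fun y => hinner S' y
          have h2 : (∑' S' : Finset (Vtx d), ∑' y : Vtx d,
              μ ({ω | ball edge ω (i - 2) = ↑S'} ∩
                  {ω | ∃ u ∈ S', (percGraph edge ω).Adj u y}) * (c0 * EB μ edge (k - i))) =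
              (∑' S' : Finset (Vtx d), ∑' y : Vtx d,
                μ ({ω | ball edge ω (i - 2) = ↑S'} ∩
                    {ω | ∃ u ∈ S', (percGraph edge ω).Adj u y})) * (c0 * EB μ edge (k - i)) := by
            rw [← ENNReal.tsum_mul_right]
            exact tsum_congr fun S' => ENNReal.tsum_mul_right
          exact h1.trans h2
      _ ≤ EB μ edge (i - 1) * (c0 * EB μ edge (k - i)) := by
          apply mul_le_mul' _ le_rfl
          have := Asum_le edge μ hmeas (i - 2)
          rw [ENNReal.tsum_prod'] at this
          rw [show (i - 2) + 1 = i - 1 from by omega] at this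
          exact this
      _ = EB μ edge (i - 1) * EB μ edge (k - i) * c0 := by ring
    -- put everything together
    have hfinal : μ {ω | (percGraph edge ω).edist 0 x ≤ (k : ℕ∞)} ≤
        EB μ edge (k - 1) * c0 +
          ∑ i ∈ Finset.Icc 2 k, EB μ edge (i - 1) * EB μ edge (k - i) * c0 := by
      calc μ {ω | (percGraph edge ω).edist 0 x ≤ (k : ℕ∞)}
          ≤ μ ({ω | ¬ (ball edge ω (k - 1)).Finite} ∪
            ((⋃ z, E1 z) ∪ ⋃ i ∈ Finset.Icc 2 k, ⋃ p, E2 i p)) := measure_mono hincl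
        _ ≤ μ {ω | ¬ (ball edge ω (k - 1)).Finite} +
            μ ((⋃ z, E1 z) ∪ ⋃ i ∈ Finset.Icc 2 k, ⋃ p, E2 i p) := measure_union_le _ _
        _ = μ ((⋃ z, E1 z) ∪ ⋃ i ∈ Finset.Icc 2 k, ⋃ p, E2 i p) := by
            rw [hGnull, zero_add]
        _ ≤ μ (⋃ z, E1 z) + μ (⋃ i ∈ Finset.Icc 2 k, ⋃ p, E2 i p) := measure_union_le _ _
        _ ≤ EB μ edge (k - 1) * c0 +
            ∑ i ∈ Finset.Icc 2 k, EB μ edge (i - 1) * EB μ edge (k - i) * c0 := by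
            refine add_le_add hE1bound ?_
            refine le_trans (measure_biUnion_finset_le _ _) ?_
            exact Finset.sum_le_sum hE2bound
    have hsplit : Finset.Icc 1 k = insert 1 (Finset.Icc 2 k) := by
      ext a
      simp only [Finset.mem_Icc, Finset.mem_insert]
      omega
    rw [hsplit, Finset.sum_insert (by simp)]
    refine le_trans hfinal (add_le_add ?_ le_rfl)
    have h1 : (1 : ℕ) - 1 = 0 := rfl
    rw [h1]
    calc EB μ edge (k - 1) * c0 = 1 * (EB μ edge (k - 1) * c0) := (one_mul _).symm
    _ ≤ EB μ edge 0 * (EB μ edge (k - 1) * c0) :=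
        mul_le_mul' (one_le_EB edge μ 0) le_rfl
    _ = EB μ edge 0 * EB μ edge (k - 1) * c0 := (mul_assoc _ _ _).symm
end
end

section
/- Let L : (0,∞) → (0,∞) be slowly varying, non-increasing and strictly less than 1 on [K,∞) for some K > 1. Then the condition −∫_K^∞ log[L(r)] / (r (log r)^2) dr < ∞ is equivalent to the following condition: for every δ > 0 there exists K_1 = K_1(δ) > K such that for all r > K_1, Σ_{k=1}^∞ log[L(r^{2^k})] / (2^k log r) > −δ, i.e. Π_{k=1}^∞ [L(r^{2^k})]^{2^{−k}} > r^{−δ}. -/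
open MeasureTheory ProbabilityTheory Filter Set
open scoped ENNReal NNReal

noncomputable section

open LongRangePercolation

private lemma pd_Ioc {u : ℕ → ℝ} (hu : Monotone u) :
    Pairwise (Function.onFun Disjoint fun k => Set.Ioc (u k) (u (k + 1))) := by
  have key : ∀ i j : ℕ, i < j →
      Disjoint (Set.Ioc (u i) (u (i + 1))) (Set.Ioc (u j) (u (j + 1))) := by
    intro i j h
    apply Set.Ioc_disjoint_Ioc.2
    exact le_trans (min_le_left _ _) (le_trans (hu h) (le_max_right _ _))
  intro i j hij
  rcases lt_or_gt_of_ne hij with h | h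
  · exact key i j h
  · exact (key j i h).symm

private lemma cover_Ioi {s : ℝ} (hs : 1 < s) (m : ℕ) :
    Set.Ioi (s ^ (2 ^ (m + 1) : ℕ)) ⊆
      ⋃ k : ℕ, Set.Ioc (s ^ (2 ^ (k + m + 1) : ℕ)) (s ^ (2 ^ (k + m + 1 + 1) : ℕ)) := by
  classical
  intro x hx
  simp only [Set.mem_Ioi] at hx
  have hex : ∃ n : ℕ, x ≤ s ^ (2 ^ (n + m + 1) : ℕ) := by
    obtain ⟨n, hn⟩ := pow_unbounded_of_one_lt x hs
    refine ⟨n, le_trans hn.le (pow_le_pow_right₀ hs.le ?_)⟩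
    calc n ≤ 2 ^ n := (Nat.lt_two_pow_self).le
      _ ≤ 2 ^ (n + m + 1) := Nat.pow_le_pow_right (by norm_num) (by omega)
  have hj : x ≤ s ^ (2 ^ (Nat.find hex + m + 1) : ℕ) := Nat.find_spec hex
  have hj0 : Nat.find hex ≠ 0 := by
    intro h0
    rw [h0] at hj
    have : (0 + m + 1 : ℕ) = m + 1 := by omega
    rw [this] at hj
    exact absurd hj (not_le.2 hx)
  obtain ⟨i, hi⟩ := Nat.exists_eq_succ_of_ne_zero hj0
  have hlt : s ^ (2 ^ (i + m + 1) : ℕ) < x := by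
    have h := Nat.find_min hex (m := i) (by omega)
    exact not_le.1 h
  refine Set.mem_iUnion.2 ⟨i, hlt, ?_⟩
  have : (i + m + 1 + 1 : ℕ) = Nat.find hex + m + 1 := by omega
  rw [this]
  exact hj

private lemma aux_ftc {a b : ℝ} (ha : 1 < a) (hab : a ≤ b) :
    ∫ t in a..b, (t * Real.log t ^ 2)⁻¹ = (Real.log a)⁻¹ - (Real.log b)⁻¹ := by
  have hne : ∀ t ∈ Set.uIcc a b, t * Real.log t ^ 2 ≠ 0 := by
    intro t ht
    rw [Set.uIcc_of_le hab] at ht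
    have ht1 : 1 < t := lt_of_lt_of_le ha ht.1
    have hl : 0 < Real.log t := Real.log_pos ht1
    have ht0 : 0 < t := lt_trans one_pos ht1
    positivity
  have hcont : ContinuousOn (fun t => (t * Real.log t ^ 2)⁻¹) (Set.uIcc a b) := by
    apply ContinuousOn.inv₀ _ hne
    apply ContinuousOn.mul continuousOn_id
    apply ContinuousOn.pow
    apply Real.continuousOn_log.mono
    intro t ht
    rw [Set.uIcc_of_le hab] at ht
    simp only [Set.mem_compl_iff, Set.mem_singleton_iff]
    exact ne_of_gt (lt_trans one_pos (lt_of_lt_of_le ha ht.1))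
  have key : ∀ t ∈ Set.uIcc a b,
      HasDerivAt (fun u => -(Real.log u)⁻¹) ((t * Real.log t ^ 2)⁻¹) t := by
    intro t ht
    rw [Set.uIcc_of_le hab] at ht
    have ht1 : 1 < t := lt_of_lt_of_le ha ht.1
    have ht0 : t ≠ 0 := ne_of_gt (lt_trans one_pos ht1)
    have hlog : Real.log t ≠ 0 := ne_of_gt (Real.log_pos ht1)
    have h := ((Real.hasDerivAt_log ht0).inv hlog).neg
    exact h.congr_deriv (by rw [neg_div, neg_neg, mul_inv, div_eq_mul_inv])
  rw [intervalIntegral.integral_eq_sub_of_hasDerivAt key hcont.intervalIntegrable]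
  ring

private lemma aux_lint_eq {a b c : ℝ} (ha : 1 < a) (hab : a ≤ b) (hc : 0 ≤ c) :
    ∫⁻ t in Set.Ioc a b, ENNReal.ofReal (c * (t * Real.log t ^ 2)⁻¹) =
      ENNReal.ofReal (c * ((Real.log a)⁻¹ - (Real.log b)⁻¹)) := by
  have hcont : ContinuousOn (fun t => c * (t * Real.log t ^ 2)⁻¹) (Set.Icc a b) := by
    apply ContinuousOn.mul continuousOn_const
    apply ContinuousOn.inv₀
    · apply ContinuousOn.mul continuousOn_id
      apply ContinuousOn.pow
      apply Real.continuousOn_log.mono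
      intro t ht
      simp only [Set.mem_compl_iff, Set.mem_singleton_iff]
      exact ne_of_gt (lt_trans one_pos (lt_of_lt_of_le ha ht.1))
    · intro t ht
      have ht1 : 1 < t := lt_of_lt_of_le ha ht.1
      have hl : 0 < Real.log t := Real.log_pos ht1
      have ht0 : 0 < t := lt_trans one_pos ht1
      positivity
  have hint : MeasureTheory.IntegrableOn (fun t => c * (t * Real.log t ^ 2)⁻¹)
      (Set.Ioc a b) := (hcont.integrableOn_Icc).mono_set Set.Ioc_subset_Icc_self
  have hnn : 0 ≤ᵐ[MeasureTheory.volume.restrict (Set.Ioc a b)]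
      (fun t => c * (t * Real.log t ^ 2)⁻¹) := by
    filter_upwards [MeasureTheory.ae_restrict_mem measurableSet_Ioc] with t ht
    simp only [Pi.zero_apply]
    have ht1 : 1 < t := lt_trans ha ht.1
    have ht0 : 0 < t := lt_trans one_pos ht1
    positivity
  rw [← MeasureTheory.ofReal_integral_eq_lintegral_ofReal hint hnn]
  congr 1
  rw [← intervalIntegral.integral_of_le hab, intervalIntegral.integral_const_mul,
    aux_ftc ha hab]

/-- For `L` positive slowly varying, non-increasing and `< 1` on `[K, ∞)`
with `K > 1`: `-∫_K^∞ log L(r)/(r (log r)^2) dr < ∞` iff for every `δ > 0` there is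
`K₁ > K` such that for all `r > K₁`,
`Σ_{k=1}^∞ log L(r^{2^k})/(2^k log r) > -δ`
(stated equivalently as `Σ_{k=1}^∞ (-log L(r^{2^k}))/(2^k log r) < δ`). -/
theorem stmt10 (L : ℝ → ℝ) (K : ℝ) (hK : 1 < K)
    (hL : SlowlyVarying L) (hLpos : ∀ r : ℝ, 0 < r → 0 < L r) (hLmeas : Measurable L)
    (hanti : AntitoneOn L (Set.Ici K)) (hlt1 : ∀ r : ℝ, K ≤ r → L r < 1) :
    (∫⁻ r in Set.Ioi K,
        ENNReal.ofReal (-Real.log (L r) / (r * Real.log r ^ 2)) < ⊤) ↔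
    (∀ δ : ℝ, 0 < δ → ∃ K1 : ℝ, K < K1 ∧ ∀ r : ℝ, K1 < r →
        ∑' k : ℕ, ENNReal.ofReal
            (-Real.log (L (r ^ (2 ^ (k + 1) : ℕ))) / ((2 : ℝ) ^ (k + 1) * Real.log r))
          < ENNReal.ofReal δ) := by
  have hKpos : (0:ℝ) < K := lt_trans one_pos hK
  have hfpos : ∀ t : ℝ, K ≤ t → 0 < -Real.log (L t) := by
    intro t ht
    have ht0 : 0 < t := lt_of_lt_of_le hKpos ht
    have := Real.log_neg (hLpos t ht0) (hlt1 t ht)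
    linarith
  have hfmono : ∀ s t : ℝ, K ≤ s → s ≤ t → -Real.log (L s) ≤ -Real.log (L t) := by
    intro s t hs hst
    have ht0 : 0 < t := lt_of_lt_of_le hKpos (hs.trans hst)
    have hLts : L t ≤ L s := hanti (Set.mem_Ici.2 hs) (Set.mem_Ici.2 (hs.trans hst)) hst
    have := Real.log_le_log (hLpos t ht0) hLts
    linarith
  have measg : Measurable fun t : ℝ =>
      ENNReal.ofReal (-Real.log (L t) / (t * Real.log t ^ 2)) := by
    apply Measurable.ennreal_ofReal
    exact (hLmeas.log.neg).div (measurable_id.mul (Real.measurable_log.pow_const 2))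
  have hupper : ∀ a b : ℝ, K ≤ a → a ≤ b →
      ∫⁻ t in Set.Ioc a b, ENNReal.ofReal (-Real.log (L t) / (t * Real.log t ^ 2)) ≤
        ENNReal.ofReal (-Real.log (L b) * ((Real.log a)⁻¹ - (Real.log b)⁻¹)) := by
    intro a b hKa hab
    have ha1 : 1 < a := lt_of_lt_of_le hK hKa
    rw [← aux_lint_eq ha1 hab (hfpos b (hKa.trans hab)).le]
    apply MeasureTheory.setLIntegral_mono
      ((measurable_const.mul
        ((measurable_id.mul (Real.measurable_log.pow_const 2)).inv)).ennreal_ofReal)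
    intro t ht
    apply ENNReal.ofReal_le_ofReal
    rw [div_eq_mul_inv]
    have ht1 : 1 < t := lt_trans ha1 ht.1
    have ht0 : 0 < t := lt_trans one_pos ht1
    have hl : 0 < Real.log t := Real.log_pos ht1
    have hinv : (0:ℝ) ≤ (t * Real.log t ^ 2)⁻¹ := by positivity
    exact mul_le_mul_of_nonneg_right (hfmono t b (hKa.trans ht.1.le) ht.2) hinv
  have hlower : ∀ a b : ℝ, K ≤ a → a ≤ b →
      ENNReal.ofReal (-Real.log (L a) * ((Real.log a)⁻¹ - (Real.log b)⁻¹)) ≤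
        ∫⁻ t in Set.Ioc a b, ENNReal.ofReal (-Real.log (L t) / (t * Real.log t ^ 2)) := by
    intro a b hKa hab
    have ha1 : 1 < a := lt_of_lt_of_le hK hKa
    rw [← aux_lint_eq ha1 hab (hfpos a hKa).le]
    apply MeasureTheory.setLIntegral_mono measg
    intro t ht
    apply ENNReal.ofReal_le_ofReal
    rw [div_eq_mul_inv]
    have ht1 : 1 < t := lt_trans ha1 ht.1
    have ht0 : 0 < t := lt_trans one_pos ht1
    have hl : 0 < Real.log t := Real.log_pos ht1
    have hinv : (0:ℝ) ≤ (t * Real.log t ^ 2)⁻¹ := by positivity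
    exact mul_le_mul_of_nonneg_right (hfmono a t hKa ht.1.le) hinv
  have hdiff : ∀ r : ℝ, 1 < r → ∀ k : ℕ,
      (Real.log (r ^ (2 ^ (k + 1) : ℕ)))⁻¹ - (Real.log (r ^ (2 ^ (k + 1 + 1) : ℕ)))⁻¹ =
        ((2:ℝ) ^ (k + 1 + 1) * Real.log r)⁻¹ := by
    intro r hr k
    have hl : 0 < Real.log r := Real.log_pos hr
    rw [Real.log_pow, Real.log_pow]
    push_cast
    have h1 : ((2:ℝ) ^ (k + 1)) ≠ 0 := by positivity
    have h2 : ((2:ℝ) ^ (k + 1 + 1)) ≠ 0 := by positivity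
    field_simp
    ring
  constructor
  · -- finite integral implies the summability condition
    intro hI δ hδ
    have hK1 : (1:ℝ) < K + 1 := by linarith
    have hbmono : Monotone fun k : ℕ => (K + 1) ^ (2 ^ (k + 1) : ℕ) := fun i j hij =>
      pow_le_pow_right₀ hK1.le (Nat.pow_le_pow_right (by norm_num) (by omega))
    have hbK : ∀ k : ℕ, K ≤ (K + 1) ^ (2 ^ (k + 1) : ℕ) := by
      intro k
      calc K ≤ K + 1 := by linarith
        _ ≤ (K + 1) ^ (2 ^ (k + 1) : ℕ) :=
            le_self_pow₀ hK1.le (pow_ne_zero _ (by norm_num))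
    have hUeq := MeasureTheory.lintegral_iUnion (μ := MeasureTheory.volume)
      (s := fun k : ℕ =>
        Set.Ioc ((K + 1) ^ (2 ^ (k + 1) : ℕ)) ((K + 1) ^ (2 ^ (k + 1 + 1) : ℕ)))
      (fun _ => measurableSet_Ioc) (pd_Ioc hbmono)
      (fun t => ENNReal.ofReal (-Real.log (L t) / (t * Real.log t ^ 2)))
    have hcne : (∑' k : ℕ, ∫⁻ t in
        Set.Ioc ((K + 1) ^ (2 ^ (k + 1) : ℕ)) ((K + 1) ^ (2 ^ (k + 1 + 1) : ℕ)),
        ENNReal.ofReal (-Real.log (L t) / (t * Real.log t ^ 2))) ≠ ⊤ := by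
      rw [← hUeq]
      refine ne_of_lt (lt_of_le_of_lt (MeasureTheory.lintegral_mono_set ?_) hI)
      refine Set.iUnion_subset fun k => ?_
      intro x hx
      exact Set.mem_Ioi.2 (lt_of_le_of_lt (hbK k) hx.1)
    have htail := ENNReal.tendsto_sum_nat_add
      (fun k : ℕ => ∫⁻ t in
        Set.Ioc ((K + 1) ^ (2 ^ (k + 1) : ℕ)) ((K + 1) ^ (2 ^ (k + 1 + 1) : ℕ)),
        ENNReal.ofReal (-Real.log (L t) / (t * Real.log t ^ 2))) hcne
    have hhalf : (0:ℝ≥0∞) < ENNReal.ofReal δ / 2 :=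
      ENNReal.div_pos (ENNReal.ofReal_pos.2 hδ).ne' (by norm_num)
    obtain ⟨m, hm⟩ := (htail.eventually_lt_const hhalf).exists
    refine ⟨(K + 1) ^ (2 ^ (m + 1) : ℕ),
      lt_of_lt_of_le (by linarith) (le_self_pow₀ hK1.le (pow_ne_zero _ (by norm_num))), ?_⟩
    intro r hr
    have hrK1 : K + 1 ≤ (K + 1) ^ (2 ^ (m + 1) : ℕ) :=
      le_self_pow₀ hK1.le (pow_ne_zero _ (by norm_num))
    have hr1 : 1 < r := lt_trans (lt_of_lt_of_le hK1 hrK1) hr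
    have hrK : K < r := lt_trans (lt_of_lt_of_le (by linarith) hrK1) hr
    have hamono : Monotone fun k : ℕ => r ^ (2 ^ (k + 1) : ℕ) := fun i j hij =>
      pow_le_pow_right₀ hr1.le (Nat.pow_le_pow_right (by norm_num) (by omega))
    have haK : ∀ k : ℕ, K ≤ r ^ (2 ^ (k + 1) : ℕ) := fun k =>
      le_trans hrK.le (le_self_pow₀ hr1.le (pow_ne_zero _ (by norm_num)))
    have hterm : ∀ k : ℕ,
        ENNReal.ofReal (-Real.log (L (r ^ (2 ^ (k + 1) : ℕ))) /
            ((2:ℝ) ^ (k + 1) * Real.log r)) ≤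
          2 * ∫⁻ t in Set.Ioc (r ^ (2 ^ (k + 1) : ℕ)) (r ^ (2 ^ (k + 1 + 1) : ℕ)),
            ENNReal.ofReal (-Real.log (L t) / (t * Real.log t ^ 2)) := by
      intro k
      have h1 := hlower (r ^ (2 ^ (k + 1) : ℕ)) (r ^ (2 ^ (k + 1 + 1) : ℕ)) (haK k)
        (hamono (Nat.le_succ k))
      have heq : -Real.log (L (r ^ (2 ^ (k + 1) : ℕ))) / ((2:ℝ) ^ (k + 1) * Real.log r) =
          2 * (-Real.log (L (r ^ (2 ^ (k + 1) : ℕ))) *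
            ((Real.log (r ^ (2 ^ (k + 1) : ℕ)))⁻¹ -
              (Real.log (r ^ (2 ^ (k + 1 + 1) : ℕ)))⁻¹)) := by
        rw [hdiff r hr1 k]
        have hl : 0 < Real.log r := Real.log_pos hr1
        have h2 : ((2:ℝ) ^ (k + 1)) ≠ 0 := by positivity
        field_simp
        ring
      rw [heq, ENNReal.ofReal_mul (by norm_num : (0:ℝ) ≤ 2)]
      simp only [ENNReal.ofReal_ofNat]
      exact mul_le_mul_right h1 2
    have hUeq2 := MeasureTheory.lintegral_iUnion (μ := MeasureTheory.volume)
      (s := fun k : ℕ => Set.Ioc (r ^ (2 ^ (k + 1) : ℕ)) (r ^ (2 ^ (k + 1 + 1) : ℕ)))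
      (fun _ => measurableSet_Ioc) (pd_Ioc hamono)
      (fun t => ENNReal.ofReal (-Real.log (L t) / (t * Real.log t ^ 2)))
    calc ∑' k : ℕ, ENNReal.ofReal (-Real.log (L (r ^ (2 ^ (k + 1) : ℕ))) /
            ((2:ℝ) ^ (k + 1) * Real.log r))
        ≤ ∑' k : ℕ, 2 * ∫⁻ t in
            Set.Ioc (r ^ (2 ^ (k + 1) : ℕ)) (r ^ (2 ^ (k + 1 + 1) : ℕ)),
            ENNReal.ofReal (-Real.log (L t) / (t * Real.log t ^ 2)) :=
          ENNReal.tsum_le_tsum hterm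
      _ = 2 * ∑' k : ℕ, ∫⁻ t in
            Set.Ioc (r ^ (2 ^ (k + 1) : ℕ)) (r ^ (2 ^ (k + 1 + 1) : ℕ)),
            ENNReal.ofReal (-Real.log (L t) / (t * Real.log t ^ 2)) :=
          ENNReal.tsum_mul_left
      _ = 2 * ∫⁻ t in ⋃ k : ℕ,
            Set.Ioc (r ^ (2 ^ (k + 1) : ℕ)) (r ^ (2 ^ (k + 1 + 1) : ℕ)),
            ENNReal.ofReal (-Real.log (L t) / (t * Real.log t ^ 2)) := by rw [hUeq2]
      _ ≤ 2 * ∑' k : ℕ, ∫⁻ t in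
            Set.Ioc ((K + 1) ^ (2 ^ (k + m + 1) : ℕ)) ((K + 1) ^ (2 ^ (k + m + 1 + 1) : ℕ)),
            ENNReal.ofReal (-Real.log (L t) / (t * Real.log t ^ 2)) := by
          apply mul_le_mul_right
          refine le_trans (MeasureTheory.lintegral_mono_set ?_)
            (MeasureTheory.lintegral_iUnion_le _ _)
          refine Set.iUnion_subset fun k => ?_
          intro x hx
          apply cover_Ioi hK1 m
          simp only [Set.mem_Ioi]
          calc (K + 1) ^ (2 ^ (m + 1) : ℕ) < r := hr
            _ ≤ r ^ (2 ^ (k + 1) : ℕ) := le_self_pow₀ hr1.le (pow_ne_zero _ (by norm_num))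
            _ < x := hx.1
      _ < 2 * (ENNReal.ofReal δ / 2) := by
          rw [ENNReal.mul_lt_mul_iff_right (by norm_num) (by norm_num)]
          exact hm
      _ = ENNReal.ofReal δ := ENNReal.mul_div_cancel' (by norm_num) (by norm_num)
  · -- the summability condition implies a finite integral
    intro h
    obtain ⟨K1, hKK1, hsum⟩ := h 1 one_pos
    have hr0K : K < K1 + 1 := by linarith
    have hr01 : (1:ℝ) < K1 + 1 := lt_trans hK hr0K
    have hs := hsum (K1 + 1) (by linarith)
    have hB : K ≤ (K1 + 1) ^ (2 ^ (0 + 1) : ℕ) :=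
      le_trans hr0K.le (le_self_pow₀ hr01.le (pow_ne_zero _ (by norm_num)))
    have hsplit : Set.Ioi K ⊆
        Set.Ioc K ((K1 + 1) ^ (2 ^ (0 + 1) : ℕ)) ∪
          Set.Ioi ((K1 + 1) ^ (2 ^ (0 + 1) : ℕ)) := by
      intro x hx
      by_cases hxb : x ≤ (K1 + 1) ^ (2 ^ (0 + 1) : ℕ)
      · exact Or.inl ⟨hx, hxb⟩
      · exact Or.inr (not_le.1 hxb)
    refine lt_of_le_of_lt (le_trans (MeasureTheory.lintegral_mono_set hsplit)
      (MeasureTheory.lintegral_union_le _ _ _)) ?_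
    apply ENNReal.add_lt_top.2
    constructor
    · have hfin : ∫⁻ t in Set.Ioc K ((K1 + 1) ^ (2 ^ (0 + 1) : ℕ)),
          ENNReal.ofReal (-Real.log (L t) / (t * Real.log t ^ 2)) ≤
          ENNReal.ofReal (-Real.log (L ((K1 + 1) ^ (2 ^ (0 + 1) : ℕ))) /
              (K * Real.log K ^ 2)) *
            MeasureTheory.volume (Set.Ioc K ((K1 + 1) ^ (2 ^ (0 + 1) : ℕ))) := by
        rw [← MeasureTheory.setLIntegral_const]
        apply MeasureTheory.setLIntegral_mono measurable_const
        intro t ht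
        apply ENNReal.ofReal_le_ofReal
        have htK : K ≤ t := ht.1.le
        have ht0 : 0 < t := lt_of_lt_of_le hKpos htK
        have hlK : 0 < Real.log K := Real.log_pos hK
        have hlt : Real.log K ≤ Real.log t := Real.log_le_log hKpos htK
        apply div_le_div₀ (hfpos _ hB).le (hfmono t _ htK ht.2) (by positivity)
        exact mul_le_mul htK (pow_le_pow_left₀ hlK.le hlt 2) (by positivity) (by linarith)
      refine lt_of_le_of_lt hfin ?_
      exact ENNReal.mul_lt_top ENNReal.ofReal_lt_top measure_Ioc_lt_top
    · have hamono : Monotone fun k : ℕ => (K1 + 1) ^ (2 ^ (k + 1) : ℕ) := fun i j hij =>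
        pow_le_pow_right₀ hr01.le (Nat.pow_le_pow_right (by norm_num) (by omega))
      have haK : ∀ k : ℕ, K ≤ (K1 + 1) ^ (2 ^ (k + 1) : ℕ) := fun k =>
        le_trans hr0K.le (le_self_pow₀ hr01.le (pow_ne_zero _ (by norm_num)))
      refine lt_of_le_of_lt (MeasureTheory.lintegral_mono_set (cover_Ioi hr01 0)) ?_
      refine lt_of_le_of_lt (MeasureTheory.lintegral_iUnion_le _ _) ?_
      have hle : ∀ k : ℕ, (∫⁻ t in
          Set.Ioc ((K1 + 1) ^ (2 ^ (k + 0 + 1) : ℕ)) ((K1 + 1) ^ (2 ^ (k + 0 + 1 + 1) : ℕ)),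
          ENNReal.ofReal (-Real.log (L t) / (t * Real.log t ^ 2))) ≤
          ENNReal.ofReal (-Real.log (L ((K1 + 1) ^ (2 ^ (k + 1 + 1) : ℕ))) /
            ((2:ℝ) ^ (k + 1 + 1) * Real.log (K1 + 1))) := by
        intro k
        refine le_trans (hupper ((K1 + 1) ^ (2 ^ (k + 1) : ℕ))
          ((K1 + 1) ^ (2 ^ (k + 1 + 1) : ℕ)) (haK k) (hamono (Nat.le_succ k))) ?_
        apply le_of_eq
        rw [hdiff (K1 + 1) hr01 k, div_eq_mul_inv]
      refine lt_of_le_of_lt (ENNReal.tsum_le_tsum hle) ?_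
      have hshift : (∑' k : ℕ, ENNReal.ofReal
            (-Real.log (L ((K1 + 1) ^ (2 ^ (k + 1 + 1) : ℕ))) /
              ((2:ℝ) ^ (k + 1 + 1) * Real.log (K1 + 1)))) ≤
          ∑' k : ℕ, ENNReal.ofReal
            (-Real.log (L ((K1 + 1) ^ (2 ^ (k + 1) : ℕ))) /
              ((2:ℝ) ^ (k + 1) * Real.log (K1 + 1))) := by
        conv_rhs => rw [tsum_eq_zero_add' ENNReal.summable]
        exact le_add_self
      exact lt_of_le_of_lt hshift (lt_trans hs ENNReal.ofReal_lt_top)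
end
end
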